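/- arXiv:0902.1873 — 3 statements merged into one kernel-verified Lean document; each statement's English description precedes it below -/
import Mathlib

section
/- Let (u^n)_{n=0,…,M} be the discrete solution of the scheme starting from the discrete initial vector u^0 (with arbitrary boundary data ū^n, ū̄^n∈[0,1]). Then the interior discrete fluxes remain uniformly bounded: for every n∈{1,…,M} and every j∈{−N+1,…,N−1}, |F_j[u^n]| ≤ max_{i=1,2} sup_{(a,b)∈[0,1]²}|G_i(a,b)| + 2L. -/
open Set

noncomputable section

/-- The monotone graph `π̃` associated to an increasing capillary pressure function `π`. -/
def tildePi (π : ℝ → ℝ) (s : ℝ) : Set ℝ :=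
  if s = 0 then Set.Iic (π 0) else if s = 1 then Set.Ici (π 1) else {π s}

/-- The connection condition `π̃₁(c) ∩ π̃₂(d) ≠ ∅`. -/
def Connects (π₁ π₂ : ℝ → ℝ) (c d : ℝ) : Prop :=
  (tildePi π₁ c ∩ tildePi π₂ d).Nonempty

/-- The porosity `ϕ_{i(j)}` of the cell `(x_j, x_{j+1})` (indexed by `j`, representing the
unknown `u_{j+1/2}`): `ϕ₁` if `j < 0` (cell in `Ω₁`), `ϕ₂` if `j ≥ 0` (cell in `Ω₂`). -/
def phiCoef (ϕ₁ ϕ₂ : ℝ) (j : ℤ) : ℝ := if j < 0 then ϕ₁ else ϕ₂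

/-- The numerical flux `F_j[v]` through `x_j`, for a vector `v` (where `v j` stands for
`v_{j+1/2}`), with boundary data `ub = ū`, `uB = ū̄` and interface function `c`. -/
def numFlux (G₁ G₂ : ℝ → ℝ → ℝ) (φ₁ φ₂ : ℝ → ℝ) (c : ℝ → ℝ → ℝ) (δx : ℝ) (N : ℤ)
    (ub uB : ℝ) (v : ℤ → ℝ) (j : ℤ) : ℝ :=
  if j = -N then G₁ ub (v (-N))
  else if j = N then G₂ (v (N - 1)) uB
  else if j < 0 then G₁ (v (j - 1)) (v j) - (φ₁ (v j) - φ₁ (v (j - 1))) / δx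
  else if j = 0 then
    G₁ (v (-1)) (c (v (-1)) (v 0)) - 2 * (φ₁ (c (v (-1)) (v 0)) - φ₁ (v (-1))) / δx
  else G₂ (v (j - 1)) (v j) - (φ₂ (v j) - φ₂ (v (j - 1))) / δx

/-- The left-hand side of the implicit finite volume scheme at time step `n → n+1`,
cell `j`. -/
def schemeLHS (G₁ G₂ : ℝ → ℝ → ℝ) (φ₁ φ₂ : ℝ → ℝ) (c : ℝ → ℝ → ℝ)
    (ϕ₁ ϕ₂ δx δt : ℝ) (N : ℤ) (ubar ubbar : ℕ → ℝ) (u : ℕ → ℤ → ℝ)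
    (n : ℕ) (j : ℤ) : ℝ :=
  phiCoef ϕ₁ ϕ₂ j * (u (n + 1) j - u n j) * δx / δt
    + numFlux G₁ G₂ φ₁ φ₂ c δx N (ubar (n + 1)) (ubbar (n + 1)) (u (n + 1)) (j + 1)
    - numFlux G₁ G₂ φ₁ φ₂ c δx N (ubar (n + 1)) (ubbar (n + 1)) (u (n + 1)) j

/-- `u` takes values in `[0,1]` on the computational cells up to time level `M`. -/
def InRange (N : ℤ) (M : ℕ) (u : ℕ → ℤ → ℝ) : Prop :=
  ∀ n ≤ M, ∀ j ∈ Finset.Icc (-N) (N - 1), u n j ∈ Set.Icc (0 : ℝ) 1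

/-- `u` is a discrete solution of the implicit finite volume scheme. -/
def IsDiscreteSolution (G₁ G₂ : ℝ → ℝ → ℝ) (φ₁ φ₂ : ℝ → ℝ) (c : ℝ → ℝ → ℝ)
    (ϕ₁ ϕ₂ δx δt : ℝ) (N : ℤ) (M : ℕ) (ubar ubbar : ℕ → ℝ) (u : ℕ → ℤ → ℝ) : Prop :=
  InRange N M u ∧ ∀ n < M, ∀ j ∈ Finset.Icc (-N) (N - 1),
    schemeLHS G₁ G₂ φ₁ φ₂ c ϕ₁ ϕ₂ δx δt N ubar ubbar u n j = 0

/-- `u` is a discrete supersolution of the implicit finite volume scheme. -/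
def IsDiscreteSupersolution (G₁ G₂ : ℝ → ℝ → ℝ) (φ₁ φ₂ : ℝ → ℝ) (c : ℝ → ℝ → ℝ)
    (ϕ₁ ϕ₂ δx δt : ℝ) (N : ℤ) (M : ℕ) (ubar ubbar : ℕ → ℝ) (u : ℕ → ℤ → ℝ) : Prop :=
  InRange N M u ∧ ∀ n < M, ∀ j ∈ Finset.Icc (-N) (N - 1),
    0 ≤ schemeLHS G₁ G₂ φ₁ φ₂ c ϕ₁ ϕ₂ δx δt N ubar ubbar u n j

/-- `u` is a discrete subsolution of the implicit finite volume scheme. -/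
def IsDiscreteSubsolution (G₁ G₂ : ℝ → ℝ → ℝ) (φ₁ φ₂ : ℝ → ℝ) (c : ℝ → ℝ → ℝ)
    (ϕ₁ ϕ₂ δx δt : ℝ) (N : ℤ) (M : ℕ) (ubar ubbar : ℕ → ℝ) (u : ℕ → ℤ → ℝ) : Prop :=
  InRange N M u ∧ ∀ n < M, ∀ j ∈ Finset.Icc (-N) (N - 1),
    schemeLHS G₁ G₂ φ₁ φ₂ c ϕ₁ ϕ₂ δx δt N ubar ubbar u n j ≤ 0


section AuxLemmas
open MeasureTheory Filter


lemma tildePi_lt {π : ℝ → ℝ} (hmono : StrictMonoOn π (Icc 0 1))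
    {c c' p p' : ℝ} (hc : c ∈ Icc (0:ℝ) 1) (hc' : c' ∈ Icc (0:ℝ) 1)
    (hp : p ∈ tildePi π c) (hp' : p' ∈ tildePi π c') (h : c < c') : p < p' := by
  have h01 : π 0 < π 1 := hmono (by norm_num) (by norm_num) (by norm_num)
  have hc0 : 0 < c' := lt_of_le_of_lt hc.1 h
  have hc1 : c < 1 := lt_of_lt_of_le h hc'.2
  simp only [tildePi] at hp hp'
  rcases eq_or_ne c 0 with rfl | hcne0
  · rw [if_pos rfl] at hp
    rcases eq_or_ne c' 1 with rfl | hc'ne1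
    · rw [if_neg (by norm_num), if_pos rfl] at hp'
      exact lt_of_le_of_lt hp (lt_of_lt_of_le h01 hp')
    · rw [if_neg hc0.ne', if_neg hc'ne1] at hp'
      rw [hp']
      exact lt_of_le_of_lt hp (hmono (by norm_num) ⟨hc0.le, hc'.2⟩ hc0)
  · have hcne1 : c ≠ 1 := ne_of_lt hc1
    rw [if_neg hcne0, if_neg hcne1] at hp
    have hc0' : 0 < c := lt_of_le_of_ne hc.1 (Ne.symm hcne0)
    rcases eq_or_ne c' 1 with rfl | hc'ne1
    · rw [if_neg (by norm_num), if_pos rfl] at hp'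
      rw [hp]
      exact lt_of_lt_of_le (hmono hc (by norm_num) hc1) hp'
    · rw [if_neg hc0.ne', if_neg hc'ne1] at hp'
      rw [hp, hp']
      exact hmono hc hc' h

lemma connects_comparable {π₁ π₂ : ℝ → ℝ} (h1 : StrictMonoOn π₁ (Icc 0 1))
    (h2 : StrictMonoOn π₂ (Icc 0 1)) {c d c' d' : ℝ}
    (hc : c ∈ Icc (0:ℝ) 1) (hd : d ∈ Icc (0:ℝ) 1) (hc' : c' ∈ Icc (0:ℝ) 1)
    (hd' : d' ∈ Icc (0:ℝ) 1)
    (h : Connects π₁ π₂ c d) (h' : Connects π₁ π₂ c' d') :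
    (c ≤ c' ∧ d ≤ d') ∨ (c' ≤ c ∧ d' ≤ d) := by
  obtain ⟨p, hp1, hp2⟩ := h
  obtain ⟨p', hp1', hp2'⟩ := h'
  rcases lt_trichotomy c c' with hlt | rfl | hgt
  · left
    refine ⟨hlt.le, ?_⟩
    by_contra hdd
    push_neg at hdd
    exact absurd (tildePi_lt h1 hc hc' hp1 hp1' hlt)
      (not_lt.2 (tildePi_lt h2 hd' hd hp2' hp2 hdd).le)
  · rcases le_total d d' with hle | hle
    · exact Or.inl ⟨le_refl _, hle⟩
    · exact Or.inr ⟨le_refl _, hle⟩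
  · right
    refine ⟨hgt.le, ?_⟩
    by_contra hdd
    push_neg at hdd
    exact absurd (tildePi_lt h1 hc' hc hp1' hp1 hgt)
      (not_lt.2 (tildePi_lt h2 hd hd' hp2 hp2' hdd).le)

section
variable {π₁ π₂ φ₁ φ₂ : ℝ → ℝ} {G₁ G₂ : ℝ → ℝ → ℝ} {δx : ℝ}

/-- Sandwich of the interface flux by the two fluxes built on any connected pair. -/
lemma iface_sandwich
    (hπ₁ : StrictMonoOn π₁ (Icc 0 1)) (hπ₂ : StrictMonoOn π₂ (Icc 0 1))
    (hφ₁ : MonotoneOn φ₁ (Icc 0 1)) (hφ₂ : MonotoneOn φ₂ (Icc 0 1))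
    (hG₁mono : ∀ b ∈ Icc (0:ℝ) 1, MonotoneOn (fun a => G₁ a b) (Icc 0 1))
    (hG₁anti : ∀ a ∈ Icc (0:ℝ) 1, AntitoneOn (fun b => G₁ a b) (Icc 0 1))
    (hG₂mono : ∀ b ∈ Icc (0:ℝ) 1, MonotoneOn (fun a => G₂ a b) (Icc 0 1))
    (hG₂anti : ∀ a ∈ Icc (0:ℝ) 1, AntitoneOn (fun b => G₂ a b) (Icc 0 1))
    (hδx : 0 < δx)
    {a b C D ch dh : ℝ} (ha : a ∈ Icc (0:ℝ) 1) (hb : b ∈ Icc (0:ℝ) 1)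
    (hC : C ∈ Icc (0:ℝ) 1) (hD : D ∈ Icc (0:ℝ) 1)
    (hE : G₁ a C - 2 * (φ₁ C - φ₁ a) / δx = G₂ D b - 2 * (φ₂ b - φ₂ D) / δx)
    (hconCD : Connects π₁ π₂ C D)
    (hch : ch ∈ Icc (0:ℝ) 1) (hdh : dh ∈ Icc (0:ℝ) 1) (hcon : Connects π₁ π₂ ch dh) :
    min (G₁ a ch - 2 * (φ₁ ch - φ₁ a) / δx) (G₂ dh b - 2 * (φ₂ b - φ₂ dh) / δx)
      ≤ G₁ a C - 2 * (φ₁ C - φ₁ a) / δx ∧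
    G₁ a C - 2 * (φ₁ C - φ₁ a) / δx
      ≤ max (G₁ a ch - 2 * (φ₁ ch - φ₁ a) / δx) (G₂ dh b - 2 * (φ₂ b - φ₂ dh) / δx) := by
  rcases connects_comparable hπ₁ hπ₂ hC hD hch hdh hconCD hcon with ⟨hc1, hd1⟩ | ⟨hc1, hd1⟩
  · constructor
    · -- C ≤ ch, D ≤ dh : lower bound via G₁ side
      refine le_trans (min_le_left _ _) ?_
      have hg : G₁ a ch ≤ G₁ a C := hG₁anti a ha hC hch hc1
      have hp : φ₁ C ≤ φ₁ ch := hφ₁ hC hch hc1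
      have : 2 * (φ₁ C - φ₁ a) / δx ≤ 2 * (φ₁ ch - φ₁ a) / δx := by
        apply div_le_div_of_nonneg_right ?_ hδx.le |>.trans_eq rfl
        linarith
      linarith
    · -- upper bound via G₂ side
      rw [hE]
      refine le_trans ?_ (le_max_right _ _)
      have hg : G₂ D b ≤ G₂ dh b := hG₂mono b hb hD hdh hd1
      have : 2 * (φ₂ b - φ₂ dh) / δx ≤ 2 * (φ₂ b - φ₂ D) / δx := by
        have hp : φ₂ D ≤ φ₂ dh := hφ₂ hD hdh hd1
        apply div_le_div_of_nonneg_right ?_ hδx.le |>.trans_eq rfl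
        linarith
      linarith
  · constructor
    · -- ch ≤ C, dh ≤ D : lower via G₂ side
      rw [hE]
      refine le_trans (min_le_right _ _) ?_
      have hg : G₂ dh b ≤ G₂ D b := hG₂mono b hb hdh hD hd1
      have : 2 * (φ₂ b - φ₂ D) / δx ≤ 2 * (φ₂ b - φ₂ dh) / δx := by
        have hp : φ₂ dh ≤ φ₂ D := hφ₂ hdh hD hd1
        apply div_le_div_of_nonneg_right ?_ hδx.le |>.trans_eq rfl
        linarith
      linarith
    · -- upper via G₁ side
      refine le_trans ?_ (le_max_left _ _)
      have hg : G₁ a C ≤ G₁ a ch := hG₁anti a ha hch hC hc1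
      have : 2 * (φ₁ ch - φ₁ a) / δx ≤ 2 * (φ₁ C - φ₁ a) / δx := by
        have hp : φ₁ ch ≤ φ₁ C := hφ₁ hch hC hc1
        apply div_le_div_of_nonneg_right ?_ hδx.le |>.trans_eq rfl
        linarith
      linarith

/-- Monotonicity of the interface flux. -/
lemma iface_mono
    (hπ₁ : StrictMonoOn π₁ (Icc 0 1)) (hπ₂ : StrictMonoOn π₂ (Icc 0 1))
    (hφ₁ : MonotoneOn φ₁ (Icc 0 1)) (hφ₂ : MonotoneOn φ₂ (Icc 0 1))
    (hG₁mono : ∀ b ∈ Icc (0:ℝ) 1, MonotoneOn (fun a => G₁ a b) (Icc 0 1))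
    (hG₁anti : ∀ a ∈ Icc (0:ℝ) 1, AntitoneOn (fun b => G₁ a b) (Icc 0 1))
    (hG₂mono : ∀ b ∈ Icc (0:ℝ) 1, MonotoneOn (fun a => G₂ a b) (Icc 0 1))
    (hG₂anti : ∀ a ∈ Icc (0:ℝ) 1, AntitoneOn (fun b => G₂ a b) (Icc 0 1))
    (hδx : 0 < δx)
    {a b a' b' C D C' D' : ℝ} (ha : a ∈ Icc (0:ℝ) 1) (hb : b ∈ Icc (0:ℝ) 1)
    (ha' : a' ∈ Icc (0:ℝ) 1) (hb' : b' ∈ Icc (0:ℝ) 1)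
    (hC : C ∈ Icc (0:ℝ) 1) (hD : D ∈ Icc (0:ℝ) 1)
    (hC' : C' ∈ Icc (0:ℝ) 1) (hD' : D' ∈ Icc (0:ℝ) 1)
    (hE : G₁ a C - 2 * (φ₁ C - φ₁ a) / δx = G₂ D b - 2 * (φ₂ b - φ₂ D) / δx)
    (hE' : G₁ a' C' - 2 * (φ₁ C' - φ₁ a') / δx = G₂ D' b' - 2 * (φ₂ b' - φ₂ D') / δx)
    (hconCD : Connects π₁ π₂ C D) (hconCD' : Connects π₁ π₂ C' D')
    (haa : a ≤ a') (hbb : b' ≤ b) :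
    G₁ a C - 2 * (φ₁ C - φ₁ a) / δx ≤ G₁ a' C' - 2 * (φ₁ C' - φ₁ a') / δx := by
  rcases connects_comparable hπ₁ hπ₂ hC hD hC' hD' hconCD hconCD' with ⟨hc1, hd1⟩ | ⟨hc1, hd1⟩
  · rw [hE, hE']
    have hg1 : G₂ D b ≤ G₂ D' b := hG₂mono b hb hD hD' hd1
    have hg2 : G₂ D' b ≤ G₂ D' b' := hG₂anti D' hD' hb' hb hbb
    have : 2 * (φ₂ b' - φ₂ D') / δx ≤ 2 * (φ₂ b - φ₂ D) / δx := by
      have hp1 : φ₂ D ≤ φ₂ D' := hφ₂ hD hD' hd1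
      have hp2 : φ₂ b' ≤ φ₂ b := hφ₂ hb' hb hbb
      apply div_le_div_of_nonneg_right ?_ hδx.le |>.trans_eq rfl
      linarith
    linarith
  · have hg1 : G₁ a C ≤ G₁ a C' := hG₁anti a ha hC' hC hc1
    have hg2 : G₁ a C' ≤ G₁ a' C' := hG₁mono C' hC' ha ha' haa
    have : 2 * (φ₁ C' - φ₁ a') / δx ≤ 2 * (φ₁ C - φ₁ a) / δx := by
      have hp1 : φ₁ C' ≤ φ₁ C := hφ₁ hC' hC hc1
      have hp2 : φ₁ a ≤ φ₁ a' := hφ₁ ha ha' haa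
      apply div_le_div_of_nonneg_right ?_ hδx.le |>.trans_eq rfl
      linarith
    linarith
end

section
variable {π₁ π₂ φ₁ φ₂ : ℝ → ℝ} {G₁ G₂ : ℝ → ℝ → ℝ} {c d : ℝ → ℝ → ℝ} {δx : ℝ} {N : ℤ}

lemma numFlux_mono
    (hπ₁ : StrictMonoOn π₁ (Icc 0 1)) (hπ₂ : StrictMonoOn π₂ (Icc 0 1))
    (hφ₁ : MonotoneOn φ₁ (Icc 0 1)) (hφ₂ : MonotoneOn φ₂ (Icc 0 1))
    (hG₁mono : ∀ b ∈ Icc (0:ℝ) 1, MonotoneOn (fun a => G₁ a b) (Icc 0 1))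
    (hG₁anti : ∀ a ∈ Icc (0:ℝ) 1, AntitoneOn (fun b => G₁ a b) (Icc 0 1))
    (hG₂mono : ∀ b ∈ Icc (0:ℝ) 1, MonotoneOn (fun a => G₂ a b) (Icc 0 1))
    (hG₂anti : ∀ a ∈ Icc (0:ℝ) 1, AntitoneOn (fun b => G₂ a b) (Icc 0 1))
    (hδx : 0 < δx)
    (hcd : ∀ a ∈ Icc (0:ℝ) 1, ∀ b ∈ Icc (0:ℝ) 1,
      (c a b ∈ Icc (0:ℝ) 1 ∧ d a b ∈ Icc (0:ℝ) 1 ∧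
        G₁ a (c a b) - 2 * (φ₁ (c a b) - φ₁ a) / δx
          = G₂ (d a b) b - 2 * (φ₂ b - φ₂ (d a b)) / δx ∧
        Connects π₁ π₂ (c a b) (d a b)) ∧
      ∀ c' d' : ℝ, c' ∈ Icc (0:ℝ) 1 → d' ∈ Icc (0:ℝ) 1 →
        G₁ a c' - 2 * (φ₁ c' - φ₁ a) / δx = G₂ d' b - 2 * (φ₂ b - φ₂ d') / δx →
        Connects π₁ π₂ c' d' → c' = c a b ∧ d' = d a b)
    {j : ℤ} (hj1 : -N < j) (hj2 : j < N) {ub uB ub' uB' : ℝ} {v w : ℤ → ℝ}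
    (hv1 : v (j-1) ∈ Icc (0:ℝ) 1) (hv2 : v j ∈ Icc (0:ℝ) 1)
    (hw1 : w (j-1) ∈ Icc (0:ℝ) 1) (hw2 : w j ∈ Icc (0:ℝ) 1)
    (h1 : v (j-1) ≤ w (j-1)) (h2 : w j ≤ v j) :
    numFlux G₁ G₂ φ₁ φ₂ c δx N ub uB v j ≤ numFlux G₁ G₂ φ₁ φ₂ c δx N ub' uB' w j := by
  have hjne1 : j ≠ -N := hj1.ne'
  have hjne2 : j ≠ N := hj2.ne
  unfold numFlux
  rw [if_neg hjne1, if_neg hjne2, if_neg hjne1, if_neg hjne2]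
  rcases lt_trichotomy j 0 with hj0 | rfl | hj0
  · rw [if_pos hj0, if_pos hj0]
    have hg1 : G₁ (v (j-1)) (v j) ≤ G₁ (v (j-1)) (w j) := hG₁anti _ hv1 hw2 hv2 h2
    have hg2 : G₁ (v (j-1)) (w j) ≤ G₁ (w (j-1)) (w j) := hG₁mono _ hw2 hv1 hw1 h1
    have hd : (φ₁ (w j) - φ₁ (w (j-1))) / δx ≤ (φ₁ (v j) - φ₁ (v (j-1))) / δx := by
      have p1 : φ₁ (w j) ≤ φ₁ (v j) := hφ₁ hw2 hv2 h2
      have p2 : φ₁ (v (j-1)) ≤ φ₁ (w (j-1)) := hφ₁ hv1 hw1 h1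
      apply div_le_div_of_nonneg_right ?_ hδx.le |>.trans_eq rfl
      linarith
    linarith
  · rw [if_neg (lt_irrefl 0), if_pos rfl, if_neg (lt_irrefl 0), if_pos rfl]
    have e0 : (0:ℤ) - 1 = -1 := by norm_num
    rw [e0] at hv1 hw1 h1
    obtain ⟨⟨hCv, hDv, hEv, hconv⟩, -⟩ := hcd _ hv1 _ hv2
    obtain ⟨⟨hCw, hDw, hEw, hconw⟩, -⟩ := hcd _ hw1 _ hw2
    exact iface_mono hπ₁ hπ₂ hφ₁ hφ₂ hG₁mono hG₁anti hG₂mono hG₂anti hδx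
      hv1 hv2 hw1 hw2 hCv hDv hCw hDw hEv hEw hconv hconw h1 h2
  · rw [if_neg (not_lt.2 hj0.le), if_neg hj0.ne', if_neg (not_lt.2 hj0.le), if_neg hj0.ne']
    have hg1 : G₂ (v (j-1)) (v j) ≤ G₂ (v (j-1)) (w j) := hG₂anti _ hv1 hw2 hv2 h2
    have hg2 : G₂ (v (j-1)) (w j) ≤ G₂ (w (j-1)) (w j) := hG₂mono _ hw2 hv1 hw1 h1
    have hd : (φ₂ (w j) - φ₂ (w (j-1))) / δx ≤ (φ₂ (v j) - φ₂ (v (j-1))) / δx := by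
      have p1 : φ₂ (w j) ≤ φ₂ (v j) := hφ₂ hw2 hv2 h2
      have p2 : φ₂ (v (j-1)) ≤ φ₂ (w (j-1)) := hφ₂ hv1 hw1 h1
      apply div_le_div_of_nonneg_right ?_ hδx.le |>.trans_eq rfl
      linarith
    linarith
end

lemma cell_integrable {u₀ : ℝ → ℝ} (hmeas : Measurable u₀) {p q : ℝ}
    (hrange : ∀ x ∈ Ioo p q, u₀ x ∈ Icc (0:ℝ) 1) :
    IntegrableOn u₀ (Ioo p q) := by
  refine Integrable.mono' (g := fun _ => (1:ℝ)) (integrableOn_const measure_Ioo_lt_top.ne)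
    hmeas.aestronglyMeasurable ?_
  rw [ae_restrict_iff' measurableSet_Ioo]
  filter_upwards with x hx
  have := hrange x hx
  rw [Real.norm_eq_abs, abs_le]
  exact ⟨by linarith [this.1], this.2⟩

lemma avg_claims {u₀ : ℝ → ℝ} (hmeas : Measurable u₀) {p q : ℝ} (hpq : p < q)
    (hrange : ∀ x ∈ Ioo p q, u₀ x ∈ Icc (0:ℝ) 1) {m : ℝ}
    (hm : m * (q - p) = ∫ x in Ioo p q, u₀ x) :
    m ∈ Icc (0:ℝ) 1 ∧ (∀ δ > 0, ∃ x ∈ Ioo p q, u₀ x < m + δ) ∧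
      (∀ δ > 0, ∃ x ∈ Ioo p q, m - δ < u₀ x) := by
  have hInt := cell_integrable hmeas hrange
  have hvol : (volume (Ioo p q)).toReal = q - p := by
    rw [Real.volume_Ioo, ENNReal.toReal_ofReal (by linarith)]
  have hconst : ∀ t : ℝ, ∫ _ in Ioo p q, t = t * (q - p) := by
    intro t
    rw [setIntegral_const, measureReal_def, hvol, smul_eq_mul, mul_comm]
  have hqp : 0 < q - p := by linarith
  have lower : ∀ t : ℝ, (∀ x ∈ Ioo p q, t ≤ u₀ x) → t ≤ m := by
    intro t ht
    have : t * (q - p) ≤ m * (q - p) := by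
      rw [hm, ← hconst t]
      exact setIntegral_mono_on (integrableOn_const measure_Ioo_lt_top.ne)
        hInt measurableSet_Ioo ht
    exact le_of_mul_le_mul_right this hqp
  have upper : ∀ t : ℝ, (∀ x ∈ Ioo p q, u₀ x ≤ t) → m ≤ t := by
    intro t ht
    have : m * (q - p) ≤ t * (q - p) := by
      rw [hm, ← hconst t]
      exact setIntegral_mono_on hInt (integrableOn_const measure_Ioo_lt_top.ne)
        measurableSet_Ioo ht
    exact le_of_mul_le_mul_right this hqp
  refine ⟨⟨lower 0 (fun x hx => (hrange x hx).1), upper 1 (fun x hx => (hrange x hx).2)⟩,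
    ?_, ?_⟩
  · intro δ hδ
    by_contra hcon
    push_neg at hcon
    have := lower (m + δ) hcon
    linarith
  · intro δ hδ
    by_contra hcon
    push_neg at hcon
    have := upper (m - δ) hcon
    linarith

/-- Near-attainment of the average through a monotone continuous `φ`. -/
lemma phi_avg {u₀ : ℝ → ℝ} (hmeas : Measurable u₀) {p q : ℝ} (hpq : p < q)
    (hrange : ∀ x ∈ Ioo p q, u₀ x ∈ Icc (0:ℝ) 1) {m : ℝ}
    (hm : m * (q - p) = ∫ x in Ioo p q, u₀ x)
    {φ : ℝ → ℝ} (hmono : MonotoneOn φ (Icc 0 1)) (hcont : ContinuousOn φ (Icc 0 1))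
    {ε : ℝ} (hε : 0 < ε) :
    (∃ x ∈ Ioo p q, φ (u₀ x) ≤ φ m + ε) ∧ (∃ x ∈ Ioo p q, φ m - ε ≤ φ (u₀ x)) := by
  obtain ⟨hmIcc, hA, hB⟩ := avg_claims hmeas hpq hrange hm
  have hcw : ContinuousWithinAt φ (Icc 0 1) m := hcont m hmIcc
  rw [Metric.continuousWithinAt_iff] at hcw
  obtain ⟨δ, hδ, hδ'⟩ := hcw ε hε
  constructor
  · obtain ⟨x, hx, hux⟩ := hA δ hδ
    refine ⟨x, hx, ?_⟩
    rcases le_or_gt (u₀ x) m with h | h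
    · have := hmono (hrange x hx) hmIcc h
      linarith
    · have hd : dist (u₀ x) m < δ := by
        rw [Real.dist_eq, abs_of_pos (by linarith)]
        linarith
      have := hδ' (hrange x hx) hd
      rw [Real.dist_eq] at this
      have := abs_lt.1 this
      linarith [this.2]
  · obtain ⟨x, hx, hux⟩ := hB δ hδ
    refine ⟨x, hx, ?_⟩
    rcases le_or_gt m (u₀ x) with h | h
    · have := hmono hmIcc (hrange x hx) h
      linarith
    · have hd : dist (u₀ x) m < δ := by
        rw [Real.dist_eq, abs_of_neg (by linarith)]
        linarith
      have := hδ' (hrange x hx) hd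
      rw [Real.dist_eq] at this
      have := abs_lt.1 this
      linarith [this.1]

lemma lip_limit {u₀ φ : ℝ → ℝ} {L ul z : ℝ} {S : Set ℝ}
    (hS : S ⊆ Ioo (-1:ℝ) 1)
    (hcont : ContinuousOn φ (Icc 0 1)) (hul : ul ∈ Icc (0:ℝ) 1)
    (hrange : ∀ x ∈ Ioo (-1:ℝ) 1, u₀ x ∈ Icc (0:ℝ) 1)
    (hlim : Tendsto u₀ (nhdsWithin z S) (nhds ul))
    (hLip : ∀ x ∈ S, ∀ y ∈ S, |φ (u₀ x) - φ (u₀ y)| ≤ L * |x - y|)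
    (hne : (nhdsWithin z S).NeBot) :
    ∀ x ∈ S, |φ (u₀ x) - φ ul| ≤ L * |x - z| := by
  intro x hx
  have hmem : ∀ᶠ y in nhdsWithin z S, y ∈ S := eventually_mem_nhdsWithin
  have hu : Tendsto u₀ (nhdsWithin z S) (nhdsWithin ul (Icc 0 1)) :=
    tendsto_nhdsWithin_iff.2 ⟨hlim, hmem.mono (fun y hy => hrange y (hS hy))⟩
  have hφu : Tendsto (fun y => φ (u₀ y)) (nhdsWithin z S) (nhds (φ ul)) :=
    Filter.Tendsto.comp (hcont ul hul).tendsto hu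
  have t1 : Tendsto (fun y => |φ (u₀ x) - φ (u₀ y)|) (nhdsWithin z S)
      (nhds |φ (u₀ x) - φ ul|) := (tendsto_const_nhds.sub hφu).abs
  have t2 : Tendsto (fun y => L * |x - y|) (nhdsWithin z S) (nhds (L * |x - z|)) :=
    ((tendsto_const_nhds.sub (tendsto_id.mono_left nhdsWithin_le_nhds)).abs).const_mul L
  exact le_of_tendsto_of_tendsto t1 t2 (hmem.mono fun y hy => hLip x hx y hy)

lemma abs_G_le_sSup {G : ℝ → ℝ → ℝ}
    (hlip : ∃ K, LipschitzOnWith K (fun p : ℝ × ℝ => G p.1 p.2) (Icc 0 1 ×ˢ Icc 0 1))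
    {a b : ℝ} (ha : a ∈ Icc (0:ℝ) 1) (hb : b ∈ Icc (0:ℝ) 1) :
    |G a b| ≤ sSup {r : ℝ | ∃ a ∈ Icc (0:ℝ) 1, ∃ b ∈ Icc (0:ℝ) 1, r = |G a b|} := by
  obtain ⟨K, hK⟩ := hlip
  have h00 : ((0:ℝ), (0:ℝ)) ∈ (Icc (0:ℝ) 1 ×ˢ Icc (0:ℝ) 1) := by
    constructor <;> constructor <;> norm_num
  refine le_csSup ⟨|G 0 0| + K, ?_⟩ ⟨a, ha, b, hb, rfl⟩
  rintro r ⟨a', ha', b', hb', rfl⟩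
  have hd := hK.dist_le_mul (a', b') ⟨ha', hb'⟩ (0, 0) h00
  have hdle : dist ((a', b') : ℝ × ℝ) ((0:ℝ), (0:ℝ)) ≤ 1 := by
    rw [Prod.dist_eq]
    simp only [Real.dist_eq, sub_zero]
    rw [max_le_iff]
    constructor <;> rw [abs_le] <;> constructor <;> linarith [ha'.1, ha'.2, hb'.1, hb'.2]
  calc |G a' b'| ≤ |G a' b' - G 0 0| + |G 0 0| := by
        have := abs_sub_abs_le_abs_sub (G a' b') (G 0 0)
        have := abs_add_le (G a' b' - G 0 0) (G 0 0)
        calc |G a' b'| = |(G a' b' - G 0 0) + G 0 0| := by ring_nf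
          _ ≤ |G a' b' - G 0 0| + |G 0 0| := abs_add_le _ _
    _ ≤ K * 1 + |G 0 0| := by
        have : dist (G a' b') (G 0 0) ≤ K * 1 :=
          le_trans hd (by
            have : (K:ℝ) ≥ 0 := K.coe_nonneg
            nlinarith)
        rw [Real.dist_eq] at this
        linarith
    _ ≤ |G 0 0| + K := by push_cast; linarith

lemma adjacent_avg_bound {u₀ φ : ℝ → ℝ} {L p q r m1 m2 : ℝ}
    (hmeas : Measurable u₀) (hpq : p < q) (hqr : q < r)
    (hrange1 : ∀ x ∈ Ioo p q, u₀ x ∈ Icc (0:ℝ) 1)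
    (hrange2 : ∀ x ∈ Ioo q r, u₀ x ∈ Icc (0:ℝ) 1)
    (hm1 : m1 * (q - p) = ∫ x in Ioo p q, u₀ x)
    (hm2 : m2 * (r - q) = ∫ x in Ioo q r, u₀ x)
    (hmono : MonotoneOn φ (Icc 0 1)) (hcont : ContinuousOn φ (Icc 0 1))
    (hLip : ∀ x ∈ Ioo p r, ∀ y ∈ Ioo p r, |φ (u₀ x) - φ (u₀ y)| ≤ L * |x - y|) :
    |φ m2 - φ m1| ≤ L * (r - p) := by
  have hLpos : 0 ≤ L := by
    have hx : (p + q)/2 ∈ Ioo p r := ⟨by linarith, by linarith⟩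
    have hy : (q + r)/2 ∈ Ioo p r := ⟨by linarith, by linarith⟩
    have h1 := hLip _ hx _ hy
    have h2 := abs_nonneg (φ (u₀ ((p+q)/2)) - φ (u₀ ((q+r)/2)))
    have h3 : |(p + q)/2 - (q + r)/2| = (r - p)/2 := by
      rw [abs_of_nonpos (by linarith)]; ring
    rw [h3] at h1
    nlinarith
  refine le_of_forall_pos_le_add (fun ε hε => ?_)
  have hε2 : 0 < ε / 2 := by linarith
  obtain ⟨⟨x1, hx1, hx1'⟩, ⟨y1, hy1, hy1'⟩⟩ := phi_avg hmeas hpq hrange1 hm1 hmono hcont hε2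
  obtain ⟨⟨x2, hx2, hx2'⟩, ⟨y2, hy2, hy2'⟩⟩ := phi_avg hmeas hqr hrange2 hm2 hmono hcont hε2
  have sub1 : Ioo p q ⊆ Ioo p r := Ioo_subset_Ioo le_rfl hqr.le
  have sub2 : Ioo q r ⊆ Ioo p r := Ioo_subset_Ioo hpq.le le_rfl
  have hb1 := hLip _ (sub2 hy2) _ (sub1 hx1)
  have hb2 := hLip _ (sub2 hx2) _ (sub1 hy1)
  have hd1 : |y2 - x1| ≤ r - p := by
    rw [abs_le]; constructor <;> [linarith [hy2.1, hx1.2]; linarith [hy2.2, hx1.1]]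
  have hd2 : |x2 - y1| ≤ r - p := by
    rw [abs_le]; constructor <;> [linarith [hx2.1, hy1.2]; linarith [hx2.2, hy1.1]]
  rw [abs_le]
  have e1 : L * |y2 - x1| ≤ L * (r - p) := mul_le_mul_of_nonneg_left hd1 hLpos
  have e2 : L * |x2 - y1| ≤ L * (r - p) := mul_le_mul_of_nonneg_left hd2 hLpos
  have a1 := abs_le.1 hb1
  have a2 := abs_le.1 hb2
  constructor <;> [linarith [a1.1, a1.2]; linarith [a2.1, a2.2]]

lemma endcell_avg_bound {u₀ φ : ℝ → ℝ} {L p q ul m : ℝ}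
    (hmeas : Measurable u₀) (hpq : p < q)
    (hrange : ∀ x ∈ Ioo p q, u₀ x ∈ Icc (0:ℝ) 1)
    (hm : m * (q - p) = ∫ x in Ioo p q, u₀ x)
    (hmono : MonotoneOn φ (Icc 0 1)) (hcont : ContinuousOn φ (Icc 0 1))
    (hlip_pt : ∀ x ∈ Ioo p q, |φ (u₀ x) - φ ul| ≤ L * (q - p)) :
    |φ m - φ ul| ≤ L * (q - p) := by
  refine le_of_forall_pos_le_add (fun ε hε => ?_)
  obtain ⟨⟨x1, hx1, hx1'⟩, ⟨x2, hx2, hx2'⟩⟩ := phi_avg hmeas hpq hrange hm hmono hcont hε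
  have a1 := abs_le.1 (hlip_pt _ hx1)
  have a2 := abs_le.1 (hlip_pt _ hx2)
  rw [abs_le]
  constructor <;> [linarith [a2.1]; linarith [a1.2]]

lemma step_bound {π₁ π₂ φ₁ φ₂ : ℝ → ℝ} {G₁ G₂ : ℝ → ℝ → ℝ} {c d : ℝ → ℝ → ℝ}
    {ϕ₁ ϕ₂ δx δt : ℝ} {N : ℤ}
    (hπ₁ : StrictMonoOn π₁ (Icc 0 1)) (hπ₂ : StrictMonoOn π₂ (Icc 0 1))
    (hφ₁ : MonotoneOn φ₁ (Icc 0 1)) (hφ₂ : MonotoneOn φ₂ (Icc 0 1))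
    (hG₁mono : ∀ b ∈ Icc (0:ℝ) 1, MonotoneOn (fun a => G₁ a b) (Icc 0 1))
    (hG₁anti : ∀ a ∈ Icc (0:ℝ) 1, AntitoneOn (fun b => G₁ a b) (Icc 0 1))
    (hG₂mono : ∀ b ∈ Icc (0:ℝ) 1, MonotoneOn (fun a => G₂ a b) (Icc 0 1))
    (hG₂anti : ∀ a ∈ Icc (0:ℝ) 1, AntitoneOn (fun b => G₂ a b) (Icc 0 1))
    (hδx : 0 < δx) (hδt : 0 < δt) (hϕ₁p : 0 < ϕ₁) (hϕ₂p : 0 < ϕ₂)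
    (hcd : ∀ a ∈ Icc (0:ℝ) 1, ∀ b ∈ Icc (0:ℝ) 1,
      (c a b ∈ Icc (0:ℝ) 1 ∧ d a b ∈ Icc (0:ℝ) 1 ∧
        G₁ a (c a b) - 2 * (φ₁ (c a b) - φ₁ a) / δx
          = G₂ (d a b) b - 2 * (φ₂ b - φ₂ (d a b)) / δx ∧
        Connects π₁ π₂ (c a b) (d a b)) ∧
      ∀ c' d' : ℝ, c' ∈ Icc (0:ℝ) 1 → d' ∈ Icc (0:ℝ) 1 →
        G₁ a c' - 2 * (φ₁ c' - φ₁ a) / δx = G₂ d' b - 2 * (φ₂ b - φ₂ d') / δx →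
        Connects π₁ π₂ c' d' → c' = c a b ∧ d' = d a b)
    (hN1 : 1 ≤ N)
    {ub uB : ℝ} (hub : ub ∈ Icc (0:ℝ) 1) (huB : uB ∈ Icc (0:ℝ) 1)
    {v w : ℤ → ℝ}
    (hv : ∀ j ∈ Finset.Icc (-N) (N-1), v j ∈ Icc (0:ℝ) 1)
    (hw : ∀ j ∈ Finset.Icc (-N) (N-1), w j ∈ Icc (0:ℝ) 1)
    (hscheme : ∀ j ∈ Finset.Icc (-N) (N-1),
      phiCoef ϕ₁ ϕ₂ j * (v j - w j) * δx / δt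
        + numFlux G₁ G₂ φ₁ φ₂ c δx N ub uB v (j+1)
        - numFlux G₁ G₂ φ₁ φ₂ c δx N ub uB v j = 0)
    {Bd : ℝ}
    (hBd1 : ∀ a ∈ Icc (0:ℝ) 1, ∀ b ∈ Icc (0:ℝ) 1, |G₁ a b| ≤ Bd)
    (hBd2 : ∀ a ∈ Icc (0:ℝ) 1, ∀ b ∈ Icc (0:ℝ) 1, |G₂ a b| ≤ Bd)
    (hprev : ∀ j : ℤ, -N+1 ≤ j → j ≤ N-1 →
      |numFlux G₁ G₂ φ₁ φ₂ c δx N ub uB w j| ≤ Bd) :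
    ∀ j ∈ Finset.Icc (-N) N, |numFlux G₁ G₂ φ₁ φ₂ c δx N ub uB v j| ≤ Bd := by
  have hsne : (Finset.Icc (-N) N).Nonempty := ⟨0, Finset.mem_Icc.2 (by omega)⟩
  have hbd : ∀ j : ℤ, j = -N ∨ j = N → |numFlux G₁ G₂ φ₁ φ₂ c δx N ub uB v j| ≤ Bd := by
    intro j hj
    rcases hj with h | h <;> rw [h]
    · have he : numFlux G₁ G₂ φ₁ φ₂ c δx N ub uB v (-N) = G₁ ub (v (-N)) := by
        unfold numFlux; rw [if_pos rfl]
      rw [he]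
      exact hBd1 _ hub _ (hv (-N) (Finset.mem_Icc.2 (by omega)))
    · have he : numFlux G₁ G₂ φ₁ φ₂ c δx N ub uB v N = G₂ (v (N-1)) uB := by
        unfold numFlux; rw [if_neg (by omega), if_pos rfl]
      rw [he]
      exact hBd2 _ (hv (N-1) (Finset.mem_Icc.2 (by omega))) _ huB
  have hphi : ∀ j : ℤ, 0 < phiCoef ϕ₁ ϕ₂ j := by
    intro j; unfold phiCoef; split <;> assumption
  have hup : ∀ j ∈ Finset.Icc (-N) N, numFlux G₁ G₂ φ₁ φ₂ c δx N ub uB v j ≤ Bd := by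
    obtain ⟨j0, hj0s, hmax'⟩ := Finset.exists_max_image (Finset.Icc (-N) N)
      (fun j => numFlux G₁ G₂ φ₁ φ₂ c δx N ub uB v j) hsne
    have hmax : ∀ a ∈ Finset.Icc (-N) N, numFlux G₁ G₂ φ₁ φ₂ c δx N ub uB v a
        ≤ numFlux G₁ G₂ φ₁ φ₂ c δx N ub uB v j0 := hmax'
    have hj0 := Finset.mem_Icc.1 hj0s
    intro j hj
    refine le_trans (hmax j hj) ?_
    rcases eq_or_ne j0 (-N) with h | hne1
    · exact (abs_le.1 (hbd _ (Or.inl h))).2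
    rcases eq_or_ne j0 N with h | hne2
    · exact (abs_le.1 (hbd _ (Or.inr h))).2
    have hjint1 : -N + 1 ≤ j0 := by omega
    have hjint2 : j0 ≤ N - 1 := by omega
    have hs1 := hscheme (j0-1) (Finset.mem_Icc.2 (by omega))
    have hs2 := hscheme j0 (Finset.mem_Icc.2 (by omega))
    rw [show j0 - 1 + 1 = j0 by ring] at hs1
    have hent1 : numFlux G₁ G₂ φ₁ φ₂ c δx N ub uB v (j0-1)
        ≤ numFlux G₁ G₂ φ₁ φ₂ c δx N ub uB v j0 := hmax _ (Finset.mem_Icc.2 (by omega))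
    have hent2 : numFlux G₁ G₂ φ₁ φ₂ c δx N ub uB v (j0+1)
        ≤ numFlux G₁ G₂ φ₁ φ₂ c δx N ub uB v j0 := hmax _ (Finset.mem_Icc.2 (by omega))
    have hd1 : v (j0-1) ≤ w (j0-1) := by
      by_contra hcon
      push_neg at hcon
      have hpos : 0 < phiCoef ϕ₁ ϕ₂ (j0-1) * (v (j0-1) - w (j0-1)) * δx / δt :=
        div_pos (mul_pos (mul_pos (hphi _) (by linarith)) hδx) hδt
      linarith
    have hd2 : w j0 ≤ v j0 := by
      by_contra hcon
      push_neg at hcon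
      have hneg : phiCoef ϕ₁ ϕ₂ j0 * (v j0 - w j0) * δx / δt < 0 :=
        div_neg_of_neg_of_pos
          (mul_neg_of_neg_of_pos (mul_neg_of_pos_of_neg (hphi _) (by linarith)) hδx) hδt
      linarith
    have m1 := hw (j0-1) (Finset.mem_Icc.2 (by omega))
    have m2 := hw j0 (Finset.mem_Icc.2 (by omega))
    have m3 := hv (j0-1) (Finset.mem_Icc.2 (by omega))
    have m4 := hv j0 (Finset.mem_Icc.2 (by omega))
    have hm := numFlux_mono (d := d) hπ₁ hπ₂ hφ₁ hφ₂ hG₁mono hG₁anti hG₂mono hG₂anti hδx hcd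
      (show -N < j0 by omega) (show j0 < N by omega) m3 m4 m1 m2 hd1 hd2
      (ub := ub) (uB := uB) (ub' := ub) (uB' := uB)
    exact le_trans hm (abs_le.1 (hprev j0 hjint1 hjint2)).2
  have hlo : ∀ j ∈ Finset.Icc (-N) N, -Bd ≤ numFlux G₁ G₂ φ₁ φ₂ c δx N ub uB v j := by
    obtain ⟨j0, hj0s, hmin'⟩ := Finset.exists_min_image (Finset.Icc (-N) N)
      (fun j => numFlux G₁ G₂ φ₁ φ₂ c δx N ub uB v j) hsne
    have hmin : ∀ a ∈ Finset.Icc (-N) N, numFlux G₁ G₂ φ₁ φ₂ c δx N ub uB v j0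
        ≤ numFlux G₁ G₂ φ₁ φ₂ c δx N ub uB v a := hmin'
    have hj0 := Finset.mem_Icc.1 hj0s
    intro j hj
    refine le_trans ?_ (hmin j hj)
    rcases eq_or_ne j0 (-N) with h | hne1
    · exact (abs_le.1 (hbd _ (Or.inl h))).1
    rcases eq_or_ne j0 N with h | hne2
    · exact (abs_le.1 (hbd _ (Or.inr h))).1
    have hjint1 : -N + 1 ≤ j0 := by omega
    have hjint2 : j0 ≤ N - 1 := by omega
    have hs1 := hscheme (j0-1) (Finset.mem_Icc.2 (by omega))
    have hs2 := hscheme j0 (Finset.mem_Icc.2 (by omega))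
    rw [show j0 - 1 + 1 = j0 by ring] at hs1
    have hent1 : numFlux G₁ G₂ φ₁ φ₂ c δx N ub uB v j0
        ≤ numFlux G₁ G₂ φ₁ φ₂ c δx N ub uB v (j0-1) := hmin _ (Finset.mem_Icc.2 (by omega))
    have hent2 : numFlux G₁ G₂ φ₁ φ₂ c δx N ub uB v j0
        ≤ numFlux G₁ G₂ φ₁ φ₂ c δx N ub uB v (j0+1) := hmin _ (Finset.mem_Icc.2 (by omega))
    have hd1 : w (j0-1) ≤ v (j0-1) := by
      by_contra hcon
      push_neg at hcon
      have hneg : phiCoef ϕ₁ ϕ₂ (j0-1) * (v (j0-1) - w (j0-1)) * δx / δt < 0 :=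
        div_neg_of_neg_of_pos
          (mul_neg_of_neg_of_pos (mul_neg_of_pos_of_neg (hphi _) (by linarith)) hδx) hδt
      linarith
    have hd2 : v j0 ≤ w j0 := by
      by_contra hcon
      push_neg at hcon
      have hpos : 0 < phiCoef ϕ₁ ϕ₂ j0 * (v j0 - w j0) * δx / δt :=
        div_pos (mul_pos (mul_pos (hphi _) (by linarith)) hδx) hδt
      linarith
    have m1 := hw (j0-1) (Finset.mem_Icc.2 (by omega))
    have m2 := hw j0 (Finset.mem_Icc.2 (by omega))
    have m3 := hv (j0-1) (Finset.mem_Icc.2 (by omega))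
    have m4 := hv j0 (Finset.mem_Icc.2 (by omega))
    have hm := numFlux_mono (d := d) hπ₁ hπ₂ hφ₁ hφ₂ hG₁mono hG₁anti hG₂mono hG₂anti hδx hcd
      (show -N < j0 by omega) (show j0 < N by omega) m1 m2 m3 m4 hd1 hd2
      (ub := ub) (uB := uB) (ub' := ub) (uB' := uB)
    exact le_trans (abs_le.1 (hprev j0 hjint1 hjint2)).1 hm
  intro j hj
  exact abs_le.2 ⟨hlo j hj, hup j hj⟩

end AuxLemmas

/-- Uniform bound on the interior discrete fluxes of the discrete solution, at every
time level, by `max_i sup |G_i| + 2L`. -/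
theorem stmt7
    (T : ℝ) (hT : 0 < T) (N M : ℕ) (hN : 0 < N) (hM : 0 < M)
    (δx δt : ℝ) (hδxdef : δx = 1 / (N : ℝ)) (hδtdef : δt = T / (M : ℝ))
    (ϕ₁ ϕ₂ : ℝ) (hϕ₁ : ϕ₁ ∈ Ioo (0:ℝ) 1) (hϕ₂ : ϕ₂ ∈ Ioo (0:ℝ) 1)
    (π₁ π₂ φ₁ φ₂ : ℝ → ℝ) (G₁ G₂ : ℝ → ℝ → ℝ)
    (hπ₁mono : StrictMonoOn π₁ (Icc 0 1)) (hπ₁lip : ∃ K, LipschitzOnWith K π₁ (Icc 0 1))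
    (hπ₂mono : StrictMonoOn π₂ (Icc 0 1)) (hπ₂lip : ∃ K, LipschitzOnWith K π₂ (Icc 0 1))
    (hφ₁mono : StrictMonoOn φ₁ (Icc 0 1)) (hφ₁lip : ∃ K, LipschitzOnWith K φ₁ (Icc 0 1))
    (hφ₁zero : φ₁ 0 = 0)
    (hφ₂mono : StrictMonoOn φ₂ (Icc 0 1)) (hφ₂lip : ∃ K, LipschitzOnWith K φ₂ (Icc 0 1))
    (hφ₂zero : φ₂ 0 = 0)
    (hG₁lip : ∃ K, LipschitzOnWith K (fun p : ℝ × ℝ => G₁ p.1 p.2) (Icc 0 1 ×ˢ Icc 0 1))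
    (hG₁mono : ∀ b ∈ Icc (0:ℝ) 1, MonotoneOn (fun a => G₁ a b) (Icc 0 1))
    (hG₁anti : ∀ a ∈ Icc (0:ℝ) 1, AntitoneOn (fun b => G₁ a b) (Icc 0 1))
    (hG₂lip : ∃ K, LipschitzOnWith K (fun p : ℝ × ℝ => G₂ p.1 p.2) (Icc 0 1 ×ˢ Icc 0 1))
    (hG₂mono : ∀ b ∈ Icc (0:ℝ) 1, MonotoneOn (fun a => G₂ a b) (Icc 0 1))
    (hG₂anti : ∀ a ∈ Icc (0:ℝ) 1, AntitoneOn (fun b => G₂ a b) (Icc 0 1))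
    (c d : ℝ → ℝ → ℝ)
    (hcd : ∀ a ∈ Icc (0:ℝ) 1, ∀ b ∈ Icc (0:ℝ) 1,
      (c a b ∈ Icc (0:ℝ) 1 ∧ d a b ∈ Icc (0:ℝ) 1 ∧
        G₁ a (c a b) - 2 * (φ₁ (c a b) - φ₁ a) / δx
          = G₂ (d a b) b - 2 * (φ₂ b - φ₂ (d a b)) / δx ∧
        Connects π₁ π₂ (c a b) (d a b)) ∧
      ∀ c' d' : ℝ, c' ∈ Icc (0:ℝ) 1 → d' ∈ Icc (0:ℝ) 1 →
        G₁ a c' - 2 * (φ₁ c' - φ₁ a) / δx = G₂ d' b - 2 * (φ₂ b - φ₂ d') / δx →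
        Connects π₁ π₂ c' d' → c' = c a b ∧ d' = d a b)
    (ubar ubbar : ℕ → ℝ)
    (hubar : ∀ n, 1 ≤ n → n ≤ M → ubar n ∈ Icc (0:ℝ) 1)
    (hubbar : ∀ n, 1 ≤ n → n ≤ M → ubbar n ∈ Icc (0:ℝ) 1)
    (u₀ : ℝ → ℝ) (hu₀meas : Measurable u₀)
    (hu₀range : ∀ x ∈ Ioo (-1:ℝ) 1, u₀ x ∈ Icc (0:ℝ) 1)
    (L : ℝ) (hL : 0 ≤ L)
    (hLip₁ : ∀ x ∈ Ioo (-1:ℝ) 0, ∀ y ∈ Ioo (-1:ℝ) 0, |φ₁ (u₀ x) - φ₁ (u₀ y)| ≤ L * |x - y|)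
    (hLip₂ : ∀ x ∈ Ioo (0:ℝ) 1, ∀ y ∈ Ioo (0:ℝ) 1, |φ₂ (u₀ x) - φ₂ (u₀ y)| ≤ L * |x - y|)
    (u01 u02 : ℝ) (hu01 : u01 ∈ Icc (0:ℝ) 1) (hu02 : u02 ∈ Icc (0:ℝ) 1)
    (hlim1 : Filter.Tendsto u₀ (nhdsWithin 0 (Ioo (-1:ℝ) 0)) (nhds u01))
    (hlim2 : Filter.Tendsto u₀ (nhdsWithin 0 (Ioo (0:ℝ) 1)) (nhds u02))
    (hconn : Connects π₁ π₂ u01 u02)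
    (u0d : ℤ → ℝ)
    (hu0d : ∀ j : ℤ, u0d j = (N : ℝ) * ∫ x in ((j : ℝ) / (N : ℝ))..(((j : ℝ) + 1) / (N : ℝ)), u₀ x)
    (u : ℕ → ℤ → ℝ)
    (hu : IsDiscreteSolution G₁ G₂ φ₁ φ₂ c ϕ₁ ϕ₂ δx δt (N : ℤ) M ubar ubbar u)
    (hu0 : ∀ j ∈ Finset.Icc (-(N : ℤ)) ((N : ℤ) - 1), u 0 j = u0d j) :
    ∀ n, 1 ≤ n → n ≤ M →
      ∀ j ∈ Finset.Icc (-(N : ℤ) + 1) ((N : ℤ) - 1),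
        |numFlux G₁ G₂ φ₁ φ₂ c δx (N : ℤ) (ubar n) (ubbar n) (u n) j|
          ≤ max (sSup {r : ℝ | ∃ a ∈ Icc (0:ℝ) 1, ∃ b ∈ Icc (0:ℝ) 1, r = |G₁ a b|})
                (sSup {r : ℝ | ∃ a ∈ Icc (0:ℝ) 1, ∃ b ∈ Icc (0:ℝ) 1, r = |G₂ a b|})
            + 2 * L := by
  
  obtain ⟨hRange, hScheme⟩ := hu
  have hNpos : (0:ℝ) < (N:ℝ) := by exact_mod_cast hN
  have hN1 : (1:ℤ) ≤ (N:ℤ) := by exact_mod_cast hN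
  have hN1R : (1:ℝ) ≤ (N:ℝ) := by exact_mod_cast hN
  have hδx0 : (0:ℝ) < δx := by rw [hδxdef]; exact div_pos one_pos hNpos
  have hMpos : (0:ℝ) < (M:ℝ) := by exact_mod_cast hM
  have hδt0 : (0:ℝ) < δt := by rw [hδtdef]; exact div_pos hT hMpos
  have hφ₁m : MonotoneOn φ₁ (Icc 0 1) := hφ₁mono.monotoneOn
  have hφ₂m : MonotoneOn φ₂ (Icc 0 1) := hφ₂mono.monotoneOn
  have hφ₁c : ContinuousOn φ₁ (Icc 0 1) := hφ₁lip.choose_spec.continuousOn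
  have hφ₂c : ContinuousOn φ₂ (Icc 0 1) := hφ₂lip.choose_spec.continuousOn
  set MG := max (sSup {r : ℝ | ∃ a ∈ Icc (0:ℝ) 1, ∃ b ∈ Icc (0:ℝ) 1, r = |G₁ a b|})
      (sSup {r : ℝ | ∃ a ∈ Icc (0:ℝ) 1, ∃ b ∈ Icc (0:ℝ) 1, r = |G₂ a b|}) with hMGdef
  have hGs1 : ∀ a ∈ Icc (0:ℝ) 1, ∀ b ∈ Icc (0:ℝ) 1, |G₁ a b| ≤ MG :=
    fun a ha b hb => (abs_G_le_sSup hG₁lip ha hb).trans (le_max_left _ _)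
  have hGs2 : ∀ a ∈ Icc (0:ℝ) 1, ∀ b ∈ Icc (0:ℝ) 1, |G₂ a b| ≤ MG :=
    fun a ha b hb => (abs_G_le_sSup hG₂lip ha hb).trans (le_max_right _ _)
  have hGb1 : ∀ a ∈ Icc (0:ℝ) 1, ∀ b ∈ Icc (0:ℝ) 1, |G₁ a b| ≤ MG + 2 * L :=
    fun a ha b hb => le_trans (hGs1 a ha b hb) (by linarith)
  have hGb2 : ∀ a ∈ Icc (0:ℝ) 1, ∀ b ∈ Icc (0:ℝ) 1, |G₂ a b| ≤ MG + 2 * L :=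
    fun a ha b hb => le_trans (hGs2 a ha b hb) (by linarith)
  -- cell average machinery
  have hmform : ∀ j : ℤ, u0d j * (((j:ℝ)+1)/(N:ℝ) - (j:ℝ)/(N:ℝ))
      = ∫ x in Ioo ((j:ℝ)/(N:ℝ)) (((j:ℝ)+1)/(N:ℝ)), u₀ x := by
    intro j
    have hle : (j:ℝ)/(N:ℝ) ≤ ((j:ℝ)+1)/(N:ℝ) :=
      div_le_div_of_nonneg_right (by linarith) hNpos.le
    rw [hu0d j, intervalIntegral.integral_of_le hle,
      ← MeasureTheory.setIntegral_congr_set MeasureTheory.Ioo_ae_eq_Ioc]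
    have he : ((j:ℝ)+1)/(N:ℝ) - (j:ℝ)/(N:ℝ) = 1/(N:ℝ) := by field_simp; ring
    rw [he]
    field_simp
  have hpqlt : ∀ j : ℤ, (j:ℝ)/(N:ℝ) < ((j:ℝ)+1)/(N:ℝ) :=
    fun j => by apply (div_lt_div_iff_of_pos_right hNpos).2; linarith
  have hu0dIcc : ∀ j : ℤ, -(N:ℤ) ≤ j → j ≤ (N:ℤ)-1 → u0d j ∈ Icc (0:ℝ) 1 := by
    intro j h1 h2
    have hj1R : -(N:ℝ) ≤ (j:ℝ) := by exact_mod_cast h1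
    have hj2R : (j:ℝ) ≤ (N:ℝ) - 1 := by
      have : ((j:ℤ):ℝ) ≤ (((N:ℤ)-1 : ℤ):ℝ) := by exact_mod_cast h2
      push_cast at this; linarith
    have hrange : ∀ x ∈ Ioo ((j:ℝ)/(N:ℝ)) (((j:ℝ)+1)/(N:ℝ)), u₀ x ∈ Icc (0:ℝ) 1 := by
      intro x hx
      refine hu₀range x ⟨?_, ?_⟩
      · have : (-1:ℝ) ≤ (j:ℝ)/(N:ℝ) := by
          rw [le_div_iff₀ hNpos]; linarith
        linarith [hx.1]
      · have : ((j:ℝ)+1)/(N:ℝ) ≤ 1 := by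
          rw [div_le_one hNpos]; linarith
        linarith [hx.2]
    exact (avg_claims hu₀meas (hpqlt j) hrange (hmform j)).1
  -- discrete gradient bounds at time 0, side 1
  have hgrad1 : ∀ j : ℤ, -(N:ℤ)+1 ≤ j → j ≤ -1 →
      |φ₁ (u0d j) - φ₁ (u0d (j-1))| ≤ 2 * L * δx := by
    intro j h1 h2
    have hj1R : -(N:ℝ) + 1 ≤ (j:ℝ) := by
      have : ((-(N:ℤ)+1 : ℤ):ℝ) ≤ ((j:ℤ):ℝ) := by exact_mod_cast h1
      push_cast at this; linarith
    have hj2R : (j:ℝ) ≤ -1 := by exact_mod_cast h2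
    have hm1' : u0d (j-1) * ((j:ℝ)/(N:ℝ) - ((j:ℝ)-1)/(N:ℝ))
        = ∫ x in Ioo (((j:ℝ)-1)/(N:ℝ)) ((j:ℝ)/(N:ℝ)), u₀ x := by
      have h := hmform (j-1)
      push_cast at h
      rw [show ((j:ℝ) - 1 + 1) = (j:ℝ) by ring] at h
      exact h
    have hsub : Ioo (((j:ℝ)-1)/(N:ℝ)) (((j:ℝ)+1)/(N:ℝ)) ⊆ Ioo (-1:ℝ) 0 := by
      intro x hx
      constructor
      · have : (-1:ℝ) ≤ ((j:ℝ)-1)/(N:ℝ) := by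
          rw [le_div_iff₀ hNpos]; linarith
        linarith [hx.1]
      · have : ((j:ℝ)+1)/(N:ℝ) ≤ 0 := by
          rw [div_le_iff₀ hNpos]; linarith
        linarith [hx.2]
    have hsub1 : Ioo (-1:ℝ) 0 ⊆ Ioo (-1:ℝ) 1 :=
      Ioo_subset_Ioo le_rfl (by norm_num)
    have hpq : ((j:ℝ)-1)/(N:ℝ) < (j:ℝ)/(N:ℝ) := by
      apply (div_lt_div_iff_of_pos_right hNpos).2; linarith
    have hqr := hpqlt j
    have hsubL : Ioo (((j:ℝ)-1)/(N:ℝ)) ((j:ℝ)/(N:ℝ)) ⊆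
        Ioo (((j:ℝ)-1)/(N:ℝ)) (((j:ℝ)+1)/(N:ℝ)) :=
      Ioo_subset_Ioo le_rfl (by apply (div_le_div_iff_of_pos_right hNpos).2; linarith)
    have hsubR : Ioo ((j:ℝ)/(N:ℝ)) (((j:ℝ)+1)/(N:ℝ)) ⊆
        Ioo (((j:ℝ)-1)/(N:ℝ)) (((j:ℝ)+1)/(N:ℝ)) :=
      Ioo_subset_Ioo (by apply (div_le_div_iff_of_pos_right hNpos).2; linarith) le_rfl
    have hbound := adjacent_avg_bound hu₀meas hpq hqr
      (fun x hx => hu₀range x (hsub1 (hsub (hsubL hx))))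
      (fun x hx => hu₀range x (hsub1 (hsub (hsubR hx))))
      hm1' (hmform j) hφ₁m hφ₁c
      (fun x hx y hy => hLip₁ x (hsub hx) y (hsub hy))
    calc |φ₁ (u0d j) - φ₁ (u0d (j-1))|
        ≤ L * (((j:ℝ)+1)/(N:ℝ) - ((j:ℝ)-1)/(N:ℝ)) := hbound
      _ = 2 * L * δx := by rw [hδxdef]; field_simp; ring
  -- side 2
  have hgrad2 : ∀ j : ℤ, 1 ≤ j → j ≤ (N:ℤ)-1 →
      |φ₂ (u0d j) - φ₂ (u0d (j-1))| ≤ 2 * L * δx := by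
    intro j h1 h2
    have hj1R : (1:ℝ) ≤ (j:ℝ) := by exact_mod_cast h1
    have hj2R : (j:ℝ) ≤ (N:ℝ) - 1 := by
      have : ((j:ℤ):ℝ) ≤ (((N:ℤ)-1 : ℤ):ℝ) := by exact_mod_cast h2
      push_cast at this; linarith
    have hm1' : u0d (j-1) * ((j:ℝ)/(N:ℝ) - ((j:ℝ)-1)/(N:ℝ))
        = ∫ x in Ioo (((j:ℝ)-1)/(N:ℝ)) ((j:ℝ)/(N:ℝ)), u₀ x := by
      have h := hmform (j-1)
      push_cast at h
      rw [show ((j:ℝ) - 1 + 1) = (j:ℝ) by ring] at h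
      exact h
    have hsub : Ioo (((j:ℝ)-1)/(N:ℝ)) (((j:ℝ)+1)/(N:ℝ)) ⊆ Ioo (0:ℝ) 1 := by
      intro x hx
      constructor
      · have : (0:ℝ) ≤ ((j:ℝ)-1)/(N:ℝ) := by
          rw [le_div_iff₀ hNpos]; linarith
        linarith [hx.1]
      · have : ((j:ℝ)+1)/(N:ℝ) ≤ 1 := by
          rw [div_le_one hNpos]; linarith
        linarith [hx.2]
    have hsub1 : Ioo (0:ℝ) 1 ⊆ Ioo (-1:ℝ) 1 :=
      Ioo_subset_Ioo (by norm_num) le_rfl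
    have hpq : ((j:ℝ)-1)/(N:ℝ) < (j:ℝ)/(N:ℝ) := by
      apply (div_lt_div_iff_of_pos_right hNpos).2; linarith
    have hqr := hpqlt j
    have hsubL : Ioo (((j:ℝ)-1)/(N:ℝ)) ((j:ℝ)/(N:ℝ)) ⊆
        Ioo (((j:ℝ)-1)/(N:ℝ)) (((j:ℝ)+1)/(N:ℝ)) :=
      Ioo_subset_Ioo le_rfl (by apply (div_le_div_iff_of_pos_right hNpos).2; linarith)
    have hsubR : Ioo ((j:ℝ)/(N:ℝ)) (((j:ℝ)+1)/(N:ℝ)) ⊆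
        Ioo (((j:ℝ)-1)/(N:ℝ)) (((j:ℝ)+1)/(N:ℝ)) :=
      Ioo_subset_Ioo (by apply (div_le_div_iff_of_pos_right hNpos).2; linarith) le_rfl
    have hbound := adjacent_avg_bound hu₀meas hpq hqr
      (fun x hx => hu₀range x (hsub1 (hsub (hsubL hx))))
      (fun x hx => hu₀range x (hsub1 (hsub (hsubR hx))))
      hm1' (hmform j) hφ₂m hφ₂c
      (fun x hx y hy => hLip₂ x (hsub hx) y (hsub hy))
    calc |φ₂ (u0d j) - φ₂ (u0d (j-1))|
        ≤ L * (((j:ℝ)+1)/(N:ℝ) - ((j:ℝ)-1)/(N:ℝ)) := hbound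
      _ = 2 * L * δx := by rw [hδxdef]; field_simp; ring
  have hneL : (nhdsWithin (0:ℝ) (Ioo (-1:ℝ) 0)).NeBot := by
    rw [← mem_closure_iff_nhdsWithin_neBot, closure_Ioo (by norm_num : (-1:ℝ) ≠ 0)]
    constructor <;> norm_num
  have hneR : (nhdsWithin (0:ℝ) (Ioo (0:ℝ) 1)).NeBot := by
    rw [← mem_closure_iff_nhdsWithin_neBot, closure_Ioo (by norm_num : (0:ℝ) ≠ 1)]
    constructor <;> norm_num
  have hptL := lip_limit (Ioo_subset_Ioo le_rfl (by norm_num : (0:ℝ) ≤ 1))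
    hφ₁c hu01 hu₀range hlim1 hLip₁ hneL
  have hptR := lip_limit (Ioo_subset_Ioo (by norm_num : (-1:ℝ) ≤ 0) le_rfl)
    hφ₂c hu02 hu₀range hlim2 hLip₂ hneR
  have hiface1 : |φ₁ (u0d (-1)) - φ₁ u01| ≤ L * δx := by
    have h := hmform (-1)
    push_cast at h
    rw [show ((-1:ℝ)+1)/(N:ℝ) = 0 by norm_num] at h
    have hpq : (-1:ℝ)/(N:ℝ) < 0 := div_neg_of_neg_of_pos (by norm_num) hNpos
    have hsub : Ioo ((-1:ℝ)/(N:ℝ)) 0 ⊆ Ioo (-1:ℝ) 0 := by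
      apply Ioo_subset_Ioo _ le_rfl
      rw [le_div_iff₀ hNpos]; nlinarith [hN1R]
    have hbound := endcell_avg_bound (ul := u01) (L := L) hu₀meas hpq
      (fun x hx => hu₀range x (Ioo_subset_Ioo le_rfl (by norm_num) (hsub hx)))
      h hφ₁m hφ₁c (fun x hx => ?_)
    · calc |φ₁ (u0d (-1)) - φ₁ u01| ≤ L * (0 - (-1:ℝ)/(N:ℝ)) := hbound
        _ = L * δx := by rw [hδxdef]; ring
    · have := hptL x (hsub hx)
      rw [sub_zero] at this
      refine this.trans ?_
      rw [abs_of_neg hx.2]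
      have hxb : -x ≤ 0 - (-1:ℝ)/(N:ℝ) := by linarith [hx.1]
      exact mul_le_mul_of_nonneg_left hxb hL
  have hiface2 : |φ₂ (u0d 0) - φ₂ u02| ≤ L * δx := by
    have h := hmform 0
    push_cast at h
    rw [show ((0:ℝ))/(N:ℝ) = 0 by simp, show ((0:ℝ)+1)/(N:ℝ) = 1/(N:ℝ) by norm_num] at h
    have hpq : (0:ℝ) < 1/(N:ℝ) := div_pos one_pos hNpos
    have hsub : Ioo (0:ℝ) (1/(N:ℝ)) ⊆ Ioo (0:ℝ) 1 := by
      apply Ioo_subset_Ioo le_rfl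
      rw [div_le_one hNpos]; exact_mod_cast hN
    have hbound := endcell_avg_bound (ul := u02) (L := L) hu₀meas hpq
      (fun x hx => hu₀range x (Ioo_subset_Ioo (by norm_num) le_rfl (hsub hx)))
      h hφ₂m hφ₂c (fun x hx => ?_)
    · calc |φ₂ (u0d 0) - φ₂ u02| ≤ L * (1/(N:ℝ) - 0) := hbound
        _ = L * δx := by rw [hδxdef]; ring
    · have := hptR x (hsub hx)
      rw [sub_zero] at this
      refine this.trans ?_
      rw [abs_of_pos hx.1]
      have hxb : x ≤ 1/(N:ℝ) - 0 := by linarith [hx.2]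
      exact mul_le_mul_of_nonneg_left hxb hL
  have hu0j : ∀ k : ℤ, -(N:ℤ) ≤ k → k ≤ (N:ℤ)-1 → u 0 k = u0d k :=
    fun k hk1 hk2 => hu0 k (Finset.mem_Icc.2 ⟨hk1, hk2⟩)
  -- bound on the interior fluxes at initial time
  have base : ∀ j : ℤ, -(N:ℤ)+1 ≤ j → j ≤ (N:ℤ)-1 →
      |numFlux G₁ G₂ φ₁ φ₂ c δx (N:ℤ) (ubar 1) (ubbar 1) (u 0) j| ≤ MG + 2 * L := by
    intro j h1 h2
    have hjne1 : j ≠ -(N:ℤ) := by omega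
    have hjne2 : j ≠ (N:ℤ) := by omega
    rcases lt_trichotomy j 0 with hj0 | rfl | hj0
    · unfold numFlux
      rw [if_neg hjne1, if_neg hjne2, if_pos hj0,
        hu0j j (by omega) (by omega), hu0j (j-1) (by omega) (by omega)]
      have hA := hu0dIcc (j-1) (by omega) (by omega)
      have hB := hu0dIcc j (by omega) (by omega)
      have hG := hGs1 _ hA _ hB
      have hgr := hgrad1 j h1 (by omega)
      have habs : |(φ₁ (u0d j) - φ₁ (u0d (j-1))) / δx|
          = |φ₁ (u0d j) - φ₁ (u0d (j-1))| / δx := by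
        rw [abs_div, abs_of_pos hδx0]
      have h2L : |φ₁ (u0d j) - φ₁ (u0d (j-1))| / δx ≤ 2 * L := by
        rw [div_le_iff₀ hδx0]; linarith
      calc |G₁ (u0d (j-1)) (u0d j) - (φ₁ (u0d j) - φ₁ (u0d (j-1))) / δx|
          ≤ |G₁ (u0d (j-1)) (u0d j)| + |(φ₁ (u0d j) - φ₁ (u0d (j-1))) / δx| :=
            abs_sub _ _
        _ ≤ MG + 2 * L := by rw [habs]; exact add_le_add hG h2L
    · unfold numFlux
      rw [if_neg hjne1, if_neg hjne2, if_neg (lt_irrefl 0), if_pos rfl,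
        hu0j (-1) (by omega) (by omega), hu0j 0 (by omega) (by omega)]
      have hA := hu0dIcc (-1) (by omega) (by omega)
      have hB2 := hu0dIcc 0 (by omega) (by omega)
      obtain ⟨⟨hC, hD, hE, hcon0⟩, -⟩ := hcd (u0d (-1)) hA (u0d 0) hB2
      have hsand := iface_sandwich hπ₁mono hπ₂mono hφ₁m hφ₂m hG₁mono hG₁anti
        hG₂mono hG₂anti hδx0 hA hB2 hC hD hE hcon0 hu01 hu02 hconn
      have hX : |G₁ (u0d (-1)) u01 - 2 * (φ₁ u01 - φ₁ (u0d (-1))) / δx| ≤ MG + 2 * L := by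
        have g := hGs1 _ hA _ hu01
        have t : |2 * (φ₁ u01 - φ₁ (u0d (-1))) / δx| ≤ 2 * L := by
          rw [abs_div, abs_of_pos hδx0, div_le_iff₀ hδx0, abs_mul,
            abs_of_pos (by norm_num : (0:ℝ) < 2), abs_sub_comm]
          linarith [hiface1]
        calc |G₁ (u0d (-1)) u01 - 2 * (φ₁ u01 - φ₁ (u0d (-1))) / δx|
            ≤ |G₁ (u0d (-1)) u01| + |2 * (φ₁ u01 - φ₁ (u0d (-1))) / δx| := abs_sub _ _
          _ ≤ MG + 2 * L := add_le_add g t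
      have hY : |G₂ u02 (u0d 0) - 2 * (φ₂ (u0d 0) - φ₂ u02) / δx| ≤ MG + 2 * L := by
        have g := hGs2 _ hu02 _ hB2
        have t : |2 * (φ₂ (u0d 0) - φ₂ u02) / δx| ≤ 2 * L := by
          rw [abs_div, abs_of_pos hδx0, div_le_iff₀ hδx0, abs_mul,
            abs_of_pos (by norm_num : (0:ℝ) < 2)]
          linarith [hiface2]
        calc |G₂ u02 (u0d 0) - 2 * (φ₂ (u0d 0) - φ₂ u02) / δx|
            ≤ |G₂ u02 (u0d 0)| + |2 * (φ₂ (u0d 0) - φ₂ u02) / δx| := abs_sub _ _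
          _ ≤ MG + 2 * L := add_le_add g t
      have hXb := abs_le.1 hX
      have hYb := abs_le.1 hY
      refine abs_le.2 ⟨?_, ?_⟩
      · refine le_trans ?_ hsand.1
        exact le_min (by linarith [hXb.1]) (by linarith [hYb.1])
      · refine le_trans hsand.2 ?_
        exact max_le (by linarith [hXb.2]) (by linarith [hYb.2])
    · unfold numFlux
      rw [if_neg hjne1, if_neg hjne2, if_neg (not_lt.2 hj0.le), if_neg hj0.ne',
        hu0j j (by omega) (by omega), hu0j (j-1) (by omega) (by omega)]
      have hA := hu0dIcc (j-1) (by omega) (by omega)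
      have hB := hu0dIcc j (by omega) (by omega)
      have hG := hGs2 _ hA _ hB
      have hgr := hgrad2 j (by omega) h2
      have habs : |(φ₂ (u0d j) - φ₂ (u0d (j-1))) / δx|
          = |φ₂ (u0d j) - φ₂ (u0d (j-1))| / δx := by
        rw [abs_div, abs_of_pos hδx0]
      have h2L : |φ₂ (u0d j) - φ₂ (u0d (j-1))| / δx ≤ 2 * L := by
        rw [div_le_iff₀ hδx0]; linarith
      calc |G₂ (u0d (j-1)) (u0d j) - (φ₂ (u0d j) - φ₂ (u0d (j-1))) / δx|
          ≤ |G₂ (u0d (j-1)) (u0d j)| + |(φ₂ (u0d j) - φ₂ (u0d (j-1))) / δx| :=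
            abs_sub _ _
        _ ≤ MG + 2 * L := by rw [habs]; exact add_le_add hG h2L
  -- interior fluxes do not depend on the boundary data
  have fluxIndep : ∀ (ub uB ub' uB' : ℝ) (v : ℤ → ℝ) (j : ℤ),
      -(N:ℤ)+1 ≤ j → j ≤ (N:ℤ)-1 →
      numFlux G₁ G₂ φ₁ φ₂ c δx (N:ℤ) ub uB v j
        = numFlux G₁ G₂ φ₁ φ₂ c δx (N:ℤ) ub' uB' v j := by
    intro ub uB ub' uB' v j hA hB
    unfold numFlux
    simp only [if_neg (show j ≠ -(N:ℤ) by omega), if_neg (show j ≠ (N:ℤ) by omega)]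
  -- expanded scheme
  have schemeExp : ∀ n : ℕ, n < M → ∀ j ∈ Finset.Icc (-(N:ℤ)) ((N:ℤ)-1),
      phiCoef ϕ₁ ϕ₂ j * (u (n+1) j - u n j) * δx / δt
        + numFlux G₁ G₂ φ₁ φ₂ c δx (N:ℤ) (ubar (n+1)) (ubbar (n+1)) (u (n+1)) (j+1)
        - numFlux G₁ G₂ φ₁ φ₂ c δx (N:ℤ) (ubar (n+1)) (ubbar (n+1)) (u (n+1)) j = 0 := by
    intro n hn j hj
    have h := hScheme n hn j hj
    unfold schemeLHS at h
    exact h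
  -- main induction on the time level
  have main : ∀ n : ℕ, 1 ≤ n → n ≤ M → ∀ j ∈ Finset.Icc (-(N:ℤ)) (N:ℤ),
      |numFlux G₁ G₂ φ₁ φ₂ c δx (N:ℤ) (ubar n) (ubbar n) (u n) j| ≤ MG + 2 * L := by
    intro n hn1
    induction n, hn1 using Nat.le_induction with
    | base =>
      intro h1 j hj
      refine step_bound (d := d) hπ₁mono hπ₂mono hφ₁m hφ₂m hG₁mono hG₁anti hG₂mono hG₂anti
        hδx0 hδt0 hϕ₁.1 hϕ₂.1 hcd hN1 (hubar 1 le_rfl hM) (hubbar 1 le_rfl hM)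
        (fun j' hj' => hRange 1 hM j' hj') (fun j' hj' => hRange 0 (Nat.zero_le M) j' hj')
        (fun j' hj' => schemeExp 0 hM j' hj') hGb1 hGb2
        (fun j' h1' h2' => base j' h1' h2') j hj
    | succ n hn ih =>
      intro hn1 j hj
      refine step_bound (d := d) hπ₁mono hπ₂mono hφ₁m hφ₂m hG₁mono hG₁anti hG₂mono hG₂anti
        hδx0 hδt0 hϕ₁.1 hϕ₂.1 hcd hN1 (hubar (n+1) (by omega) hn1) (hubbar (n+1) (by omega) hn1)
        (fun j' hj' => hRange (n+1) hn1 j' hj') (fun j' hj' => hRange n (by omega) j' hj')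
        (fun j' hj' => schemeExp n (by omega) j' hj') hGb1 hGb2
        (fun j' h1' h2' => ?_) j hj
      rw [fluxIndep (ubar (n+1)) (ubbar (n+1)) (ubar n) (ubbar n) (u n) j' h1' h2']
      exact ih (by omega) j' (Finset.mem_Icc.2 ⟨by omega, by omega⟩)
  intro n hn1 hnM j hj
  have hj' := Finset.mem_Icc.1 hj
  exact main n hn1 hnM j (Finset.mem_Icc.2 ⟨by omega, by omega⟩)
end
end

section
/- For all a,b∈[0,1]: (i) the oriented integral ∫_a^b π'(s)(f(s)−G(a,b))ds is nonnegative; and consequently (ii) Ψ(b)−Ψ(a) ≤ π(a)(G(a,b)−f(a)) − π(b)(G(a,b)−f(b)). -/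
open Set

open MeasureTheory intervalIntegral

lemma fubini_prim (u v : ℝ → ℝ) (c d : ℝ) (hcd : c ≤ d)
    (hu : IntervalIntegrable u volume c d) (hv : IntervalIntegrable v volume c d) :
    ∫ s in c..d, u s * (∫ t in c..s, v t) = ∫ t in c..d, v t * (∫ s in t..d, u s) := by
  set μ := volume.restrict (Ioc c d) with hμ
  have hu1 : Integrable u μ := hu.1
  have hv1 : Integrable v μ := hv.1
  set F : ℝ × ℝ → ℝ := {q : ℝ × ℝ | q.2 ≤ q.1}.indicator (fun q => u q.1 * v q.2) with hF
  have hFint : Integrable F (μ.prod μ) :=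
    (Integrable.mul_prod hu1 hv1).indicator (measurableSet_le measurable_snd measurable_fst)
  have swap := integral_integral_swap (f := fun s t => F (s, t)) hFint
  have hL : (∫ s, (∫ t, F (s, t) ∂μ) ∂μ) = ∫ s in c..d, u s * (∫ t in c..s, v t) := by
    rw [intervalIntegral.integral_of_le hcd]
    apply MeasureTheory.integral_congr_ae
    filter_upwards [ae_restrict_mem measurableSet_Ioc] with s hs
    have h1 : (fun t => F (s, t)) = (Iic s).indicator (fun t => u s * v t) := by
      funext t
      by_cases h : t ≤ s <;> simp [hF, Set.indicator, h]
    rw [h1, MeasureTheory.integral_indicator measurableSet_Iic, hμ,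
      Measure.restrict_restrict measurableSet_Iic]
    have h2 : Iic s ∩ Ioc c d = Ioc c s := by
      rw [Set.inter_comm, Set.Ioc_inter_Iic, min_eq_right hs.2]
    rw [h2, MeasureTheory.integral_const_mul, intervalIntegral.integral_of_le hs.1.le]
  have hR : (∫ t, (∫ s, F (s, t) ∂μ) ∂μ) = ∫ t in c..d, v t * (∫ s in t..d, u s) := by
    rw [intervalIntegral.integral_of_le hcd]
    apply MeasureTheory.integral_congr_ae
    filter_upwards [ae_restrict_mem measurableSet_Ioc] with t ht
    have h1 : (fun s => F (s, t)) = (Ici t).indicator (fun s => u s * v t) := by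
      funext s
      by_cases h : t ≤ s <;> simp [hF, Set.indicator, h]
    rw [h1, MeasureTheory.integral_indicator measurableSet_Ici, hμ,
      Measure.restrict_restrict measurableSet_Ici]
    have h2 : Ici t ∩ Ioc c d = Icc t d := by
      ext s
      constructor
      · rintro ⟨h1', h2'⟩; exact ⟨h1', h2'.2⟩
      · rintro ⟨h1', h2'⟩; exact ⟨h1', lt_of_lt_of_le ht.1 h1', h2'⟩
    rw [h2, MeasureTheory.integral_Icc_eq_integral_Ioc,
      intervalIntegral.integral_of_le ht.2]
    rw [MeasureTheory.integral_mul_const, mul_comm]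
  rw [← hL, ← hR, swap]

/-- For a monotone numerical flux `G` consistent with `f`, the oriented integral
`∫_a^b π'(s)(f(s) - G(a,b)) ds` is nonnegative, and consequently, with
`Ψ(s) = ∫₀^s π(τ)f'(τ)dτ`,
`Ψ(b) - Ψ(a) ≤ π(a)(G(a,b) - f(a)) - π(b)(G(a,b) - f(b))`. -/
theorem stmt10
    (f π fd πd : ℝ → ℝ) (G : ℝ → ℝ → ℝ)
    (hflip : ∃ K, LipschitzOnWith K f (Icc 0 1))
    (hπlip : ∃ K, LipschitzOnWith K π (Icc 0 1))
    (hπmono : MonotoneOn π (Icc 0 1))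
    (hfdint : IntervalIntegrable fd MeasureTheory.volume 0 1)
    (hfrep : ∀ s ∈ Icc (0:ℝ) 1, ∀ t ∈ Icc (0:ℝ) 1, f t - f s = ∫ a in s..t, fd a)
    (hπdnonneg : ∀ s ∈ Icc (0:ℝ) 1, 0 ≤ πd s)
    (hπdint : IntervalIntegrable πd MeasureTheory.volume 0 1)
    (hπrep : ∀ s ∈ Icc (0:ℝ) 1, ∀ t ∈ Icc (0:ℝ) 1, π t - π s = ∫ a in s..t, πd a)
    (hGmono : ∀ b ∈ Icc (0:ℝ) 1, MonotoneOn (fun a => G a b) (Icc 0 1))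
    (hGanti : ∀ a ∈ Icc (0:ℝ) 1, AntitoneOn (fun b => G a b) (Icc 0 1))
    (hGdiag : ∀ s ∈ Icc (0:ℝ) 1, G s s = f s)
    (a b : ℝ) (ha : a ∈ Icc (0:ℝ) 1) (hb : b ∈ Icc (0:ℝ) 1) :
    0 ≤ (∫ s in a..b, πd s * (f s - G a b)) ∧
    (∫ τ in (0:ℝ)..b, π τ * fd τ) - (∫ τ in (0:ℝ)..a, π τ * fd τ)
      ≤ π a * (G a b - f a) - π b * (G a b - f b) := by
  have h01 : (0:ℝ) ∈ Icc (0:ℝ) 1 := ⟨le_refl 0, zero_le_one⟩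
  have hI : uIcc (0:ℝ) 1 = Icc 0 1 := uIcc_of_le zero_le_one
  have hsub : ∀ {x y : ℝ}, x ∈ Icc (0:ℝ) 1 → y ∈ Icc (0:ℝ) 1 → uIcc x y ⊆ Icc 0 1 := by
    intro x y hx hy
    rw [← hI] at hx hy ⊢
    exact uIcc_subset_uIcc hx hy
  -- Part (i)
  have part1 : 0 ≤ ∫ s in a..b, πd s * (f s - G a b) := by
    rcases le_total a b with hab | hba
    · apply intervalIntegral.integral_nonneg hab
      intro s hs
      have hs01 : s ∈ Icc (0:ℝ) 1 := ⟨ha.1.trans hs.1, hs.2.trans hb.2⟩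
      have h1 : G a b ≤ G s b := hGmono b hb ha hs01 hs.1
      have h2 : G s b ≤ G s s := hGanti s hs01 hs01 hb hs.2
      have h3 := hGdiag s hs01
      exact mul_nonneg (hπdnonneg s hs01) (by linarith)
    · rw [intervalIntegral.integral_symm, ← intervalIntegral.integral_neg]
      apply intervalIntegral.integral_nonneg hba
      intro s hs
      have hs01 : s ∈ Icc (0:ℝ) 1 := ⟨hb.1.trans hs.1, hs.2.trans ha.2⟩
      have h1 : G s b ≤ G a b := hGmono b hb hs01 ha hs.2
      have h2 : G s s ≤ G s b := hGanti s hs01 hb hs01 hs.1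
      have h3 := hGdiag s hs01
      have : πd s * (f s - G a b) ≤ 0 :=
        mul_nonpos_of_nonneg_of_nonpos (hπdnonneg s hs01) (by linarith)
      linarith
  refine ⟨part1, ?_⟩
  -- Part (ii)
  obtain ⟨Kπ, hπl⟩ := hπlip
  have hπcont : ContinuousOn π (Icc 0 1) := hπl.continuousOn
  have huab : uIcc a b ⊆ uIcc (0:ℝ) 1 := by rw [hI]; exact hsub ha hb
  have hu0a : uIcc (0:ℝ) a ⊆ uIcc (0:ℝ) 1 := by rw [hI]; exact hsub h01 ha
  have hu0b : uIcc (0:ℝ) b ⊆ uIcc (0:ℝ) 1 := by rw [hI]; exact hsub h01 hb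
  have hfd_ab : IntervalIntegrable fd volume a b := hfdint.mono_set huab
  have hπd_ab : IntervalIntegrable πd volume a b := hπdint.mono_set huab
  have hfd_ba : IntervalIntegrable fd volume b a := hfd_ab.symm
  have hπd_ba : IntervalIntegrable πd volume b a := hπd_ab.symm
  have A1 : IntervalIntegrable (fun τ => π τ * fd τ) volume 0 a :=
    (hfdint.mono_set hu0a).continuousOn_mul (hπcont.mono (by rw [← hI]; exact hu0a))
  have A2 : IntervalIntegrable (fun τ => π τ * fd τ) volume a b :=
    hfd_ab.continuousOn_mul (hπcont.mono (by rw [← hI]; exact huab))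
  have hsplit : (∫ τ in (0:ℝ)..a, π τ * fd τ) + (∫ τ in a..b, π τ * fd τ)
      = ∫ τ in (0:ℝ)..b, π τ * fd τ :=
    intervalIntegral.integral_add_adjacent_intervals A1 A2
  -- continuity of primitives
  have hFpcont : ContinuousOn (fun s => ∫ t in a..s, fd t) (uIcc a b) :=
    intervalIntegral.continuousOn_primitive_interval' hfd_ab left_mem_uIcc
  have hπdIcc : IntegrableOn πd (Icc (0:ℝ) 1) volume :=
    (integrableOn_Icc_iff_integrableOn_Ioc).mpr hπdint.1
  have hfdIcc : IntegrableOn fd (Icc (0:ℝ) 1) volume :=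
    (integrableOn_Icc_iff_integrableOn_Ioc).mpr hfdint.1
  have hPpcont : ContinuousOn (fun τ => ∫ s in τ..b, πd s) (uIcc a b) :=
    intervalIntegral.continuousOn_primitive_interval_left (hπdIcc.mono_set (hsub ha hb))
  have B1 : IntervalIntegrable (fun s => πd s * (∫ t in a..s, fd t)) volume a b :=
    hπd_ab.mul_continuousOn hFpcont
  have B2 : IntervalIntegrable (fun τ => fd τ * (∫ s in τ..b, πd s)) volume a b :=
    hfd_ab.mul_continuousOn hPpcont
  -- Fubini, oriented
  have hfub : (∫ s in a..b, πd s * (∫ t in a..s, fd t))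
      = ∫ τ in a..b, fd τ * (∫ s in τ..b, πd s) := by
    rcases le_total a b with hab | hba
    · exact fubini_prim πd fd a b hab hπd_ab hfd_ab
    · have key := fubini_prim fd πd b a hba hfd_ba hπd_ba
      have e1 : (∫ s in b..a, πd s * (∫ t in a..s, fd t))
          = -∫ t in b..a, πd t * (∫ s in t..a, fd s) := by
        rw [← intervalIntegral.integral_neg]
        apply intervalIntegral.integral_congr
        intro s _
        show πd s * (∫ t in a..s, fd t) = -(πd s * ∫ t in s..a, fd t)
        rw [intervalIntegral.integral_symm]
        ring
      have e2 : (∫ τ in b..a, fd τ * (∫ s in τ..b, πd s))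
          = -∫ s in b..a, fd s * (∫ t in b..s, πd t) := by
        rw [← intervalIntegral.integral_neg]
        apply intervalIntegral.integral_congr
        intro s _
        show fd s * (∫ t in s..b, πd t) = -(fd s * ∫ t in b..s, πd t)
        rw [intervalIntegral.integral_symm]
        ring
      rw [intervalIntegral.integral_symm, intervalIntegral.integral_symm b a, e1, e2, key]
  have hfab : f b - f a = ∫ t in a..b, fd t := hfrep a ha b hb
  have hπab : π b - π a = ∫ t in a..b, πd t := hπrep a ha b hb
  have hE : (∫ s in a..b, πd s * (f s - G a b))
      = (∫ s in a..b, πd s * (∫ t in a..s, fd t)) + (f a - G a b) * (π b - π a) := by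
    have congr1 : EqOn (fun s => πd s * (f s - G a b))
        (fun s => πd s * (∫ t in a..s, fd t) + (f a - G a b) * πd s) (uIcc a b) := by
      intro s hs
      have hs01 := hsub ha hb hs
      have hrep := hfrep a ha s hs01
      simp only
      rw [← hrep]
      ring
    rw [intervalIntegral.integral_congr congr1,
      intervalIntegral.integral_add B1 (hπd_ab.const_mul _),
      intervalIntegral.integral_const_mul, ← hπab]
  have hM : (∫ τ in a..b, π τ * fd τ)
      = π b * (f b - f a) - (∫ τ in a..b, fd τ * (∫ s in τ..b, πd s)) := by
    have congr2 : EqOn (fun τ => π τ * fd τ)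
        (fun τ => π b * fd τ - fd τ * (∫ s in τ..b, πd s)) (uIcc a b) := by
      intro τ hτ
      have hτ01 := hsub ha hb hτ
      have hrep := hπrep τ hτ01 b hb
      simp only
      rw [← hrep]
      ring
    rw [intervalIntegral.integral_congr congr2,
      intervalIntegral.integral_sub (hfd_ab.const_mul _) B2,
      intervalIntegral.integral_const_mul, ← hfab]
  have hring : π b * (f b - f a) + (f a - G a b) * (π b - π a)
      = π a * (G a b - f a) - π b * (G a b - f b) := by ring
  have h1 : (∫ τ in (0:ℝ)..b, π τ * fd τ) - (∫ τ in (0:ℝ)..a, π τ * fd τ)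
      = ∫ τ in a..b, π τ * fd τ := by linarith
  rw [h1, hM, ← hfub]
  linarith [part1, hE, hring]
end

section
/- For every η∈ℝ and with Ω_η = {x∈(α,β) : x+η∈(α,β)}, one has ∫₀^T ∫_{Ω_η} (z(x+η,t)−z(x,t))² dx dt ≤ |z|²_{1,D} · |η| · (|η|+2δx). -/
open Set MeasureTheory

lemma tele_sum (f : ℕ → ℝ) {a b : ℕ} (h : a ≤ b) :
    ∑ j ∈ Finset.Ico a b, (f (j + 1) - f j) = f b - f a := by
  induction b, h using Nat.le_induction with
  | base => simp
  | succ b hab ih =>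
      rw [Finset.sum_Ico_succ_top (by omega), ih]; ring

lemma spatial (α δx η : ℝ) (hδx : 0 < δx) (N : ℕ) (hN : 0 < N)
    (hη : 0 ≤ η) (v : ℕ → ℝ) :
    ∫ x in {x : ℝ | x ∈ Ioo α (α + N * δx) ∧ x + η ∈ Ioo α (α + N * δx)},
        (v (⌊(x + η - α) / δx⌋.toNat + 1) - v (⌊(x - α) / δx⌋.toNat + 1)) ^ 2
      ≤ (∑ j ∈ Finset.Icc 1 (N - 1), δx * ((v (j + 1) - v j) / δx) ^ 2) * η * (η + 2 * δx) := by
  set β := α + N * δx with hβ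
  set Ω : Set ℝ := {x : ℝ | x ∈ Ioo α β ∧ x + η ∈ Ioo α β} with hΩdef
  have hΩ : MeasurableSet Ω := by
    have : Ω = Ioo α β ∩ (fun x : ℝ => x + η) ⁻¹' (Ioo α β) := by
      ext x; simp only [hΩdef, Set.mem_setOf_eq, Set.mem_inter_iff, Set.mem_preimage]
    rw [this]
    exact measurableSet_Ioo.inter (measurableSet_Ioo.preimage (measurable_add_const η))
  set D : ℕ → ℝ := fun j => v (j + 1) - v j with hD
  set G : ℝ → ℝ := fun x => (η / δx + 1) *
    ∑ j ∈ Finset.Icc 1 (N - 1),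
      (Ico (α + (j : ℝ) * δx - η) (α + (j : ℝ) * δx)).indicator (fun _ => (D j) ^ 2) x with hG
  set E : Set ℝ := (range fun j : ℤ => α + (j : ℝ) * δx) ∪
      (range fun j : ℤ => α + (j : ℝ) * δx - η) with hE
  have hEnull : volume E = 0 :=
    ((countable_range _).union (countable_range _)).measure_zero _
  -- pointwise bound
  have hpt : ∀ x, x ∉ E → x ∈ Ω →
      (v (⌊(x + η - α) / δx⌋.toNat + 1) - v (⌊(x - α) / δx⌋.toNat + 1)) ^ 2 ≤ G x := by
    intro x hxE hxΩ
    obtain ⟨hx1, hx2⟩ := hxΩ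
    set u := (x - α) / δx with hu
    set w := (x + η - α) / δx with hw
    have hu0 : 0 ≤ u := le_of_lt (div_pos (by linarith [hx1.1]) hδx)
    have hw0 : 0 ≤ w := le_of_lt (div_pos (by linarith [hx2.1]) hδx)
    have huw : u ≤ w := by
      rw [hu, hw]
      exact (div_le_div_iff_of_pos_right hδx).2 (by linarith)
    have huN : u < N := by
      rw [hu, div_lt_iff₀ hδx]
      have := hx1.2; rw [hβ] at this; linarith
    have hwN : w < N := by
      rw [hw, div_lt_iff₀ hδx]
      have := hx2.2; rw [hβ] at this; linarith
    set a := ⌊u⌋.toNat with ha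
    set b := ⌊w⌋.toNat with hb
    have haInt : (a : ℤ) = ⌊u⌋ := Int.toNat_of_nonneg (Int.floor_nonneg.2 hu0)
    have hbInt : (b : ℤ) = ⌊w⌋ := Int.toNat_of_nonneg (Int.floor_nonneg.2 hw0)
    have hab : a ≤ b := by
      rw [ha, hb]; exact Int.toNat_le_toNat (Int.floor_le_floor huw)
    have hbN : b ≤ N - 1 := by
      have : ⌊w⌋ < (N : ℤ) := Int.floor_lt.2 (by exact_mod_cast hwN)
      omega
    have hcard : ((b - a : ℕ) : ℝ) ≤ η / δx + 1 := by
      have h1 : (⌊w⌋ : ℝ) ≤ w := Int.floor_le w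
      have h2 : u - 1 < (⌊u⌋ : ℝ) := Int.sub_one_lt_floor u
      have h3 : w - u = η / δx := by
        rw [hu, hw, div_sub_div_same]; congr 1; ring
      have h4 : ((b - a : ℕ) : ℝ) = (b : ℝ) - (a : ℝ) := by
        rw [Nat.cast_sub hab]
      have hba : (b : ℝ) = (⌊w⌋ : ℝ) := by exact_mod_cast hbInt
      have haa : (a : ℝ) = (⌊u⌋ : ℝ) := by exact_mod_cast haInt
      rw [h4, hba, haa]; linarith
    have hsub : Finset.Ico (a + 1) (b + 1) ⊆ Finset.Icc 1 (N - 1) := by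
      intro j hj
      simp only [Finset.mem_Ico, Finset.mem_Icc] at *
      omega
    have hiff : ∀ j : ℕ, (x ∈ Ico (α + (j : ℝ) * δx - η) (α + (j : ℝ) * δx) ↔
        j ∈ Finset.Ico (a + 1) (b + 1)) := by
      intro j
      simp only [Set.mem_Ico, Finset.mem_Ico]
      constructor
      · rintro ⟨hge, hlt⟩
        constructor
        · have : ⌊u⌋ < (j : ℤ) := Int.floor_lt.2 (by
            rw [hu, div_lt_iff₀ hδx]; push_cast; linarith)
          omega
        · have : (j : ℤ) ≤ ⌊w⌋ := Int.le_floor.2 (by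
            rw [hw, le_div_iff₀ hδx]; push_cast; linarith)
          omega
      · rintro ⟨hle, hlt⟩
        have h1 : ⌊u⌋ < (j : ℤ) := by omega
        have h2 : (j : ℤ) ≤ ⌊w⌋ := by omega
        have h1' : u < (j : ℝ) := by exact_mod_cast Int.floor_lt.1 h1
        have h2' : ((j : ℝ)) ≤ w := by exact_mod_cast Int.le_floor.1 h2
        rw [hu, div_lt_iff₀ hδx] at h1'
        rw [hw, le_div_iff₀ hδx] at h2'
        constructor <;> linarith
    have htel : v (b + 1) - v (a + 1) = ∑ j ∈ Finset.Ico (a + 1) (b + 1), D j :=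
      (tele_sum v (by omega)).symm
    have hsumnn : (0:ℝ) ≤ ∑ j ∈ Finset.Ico (a + 1) (b + 1), (D j) ^ 2 :=
      Finset.sum_nonneg fun j _ => sq_nonneg _
    calc (v (b + 1) - v (a + 1)) ^ 2
        = (∑ j ∈ Finset.Ico (a + 1) (b + 1), D j) ^ 2 := by rw [htel]
      _ ≤ (Finset.Ico (a + 1) (b + 1)).card * ∑ j ∈ Finset.Ico (a + 1) (b + 1), (D j) ^ 2 :=
          sq_sum_le_card_mul_sum_sq
      _ ≤ (η / δx + 1) * ∑ j ∈ Finset.Ico (a + 1) (b + 1), (D j) ^ 2 := by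
          apply mul_le_mul_of_nonneg_right _ hsumnn
          rw [Nat.card_Ico]
          simpa using hcard
      _ = G x := by
          rw [hG]
          congr 1
          rw [show Finset.Ico (a + 1) (b + 1)
              = Finset.Icc 1 (N - 1) ∩ Finset.Ico (a + 1) (b + 1) from
              (Finset.inter_eq_right.2 hsub).symm, ← Finset.sum_ite_mem]
          refine Finset.sum_congr rfl fun j hj => ?_
          simp only [Set.indicator_apply, hiff j]
  have hind_int : ∀ j : ℕ,
      Integrable ((Ico (α + (j:ℝ)*δx - η) (α + (j:ℝ)*δx)).indicator (fun _ => (D j)^2)) := by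
    intro j
    rw [integrable_indicator_iff measurableSet_Ico]
    exact integrableOn_const measure_Ico_lt_top.ne
  have hGint : Integrable G := by
    rw [hG]
    exact (integrable_finset_sum _ fun j _ => hind_int j).const_mul _
  have hGnn : ∀ x, 0 ≤ G x := fun x => mul_nonneg (by positivity)
    (Finset.sum_nonneg fun j _ => Set.indicator_nonneg (fun _ _ => sq_nonneg _) x)
  have step1 : (∫ x in Ω,
      (v (⌊(x + η - α) / δx⌋.toNat + 1) - v (⌊(x - α) / δx⌋.toNat + 1)) ^ 2)
      ≤ ∫ x in Ω, G x := by
    refine integral_mono_of_nonneg (ae_of_all _ fun x => sq_nonneg _) hGint.integrableOn ?_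
    filter_upwards [ae_restrict_mem hΩ,
      ae_restrict_of_ae (measure_eq_zero_iff_ae_notMem.1 hEnull)] with x hxΩ hxE
    exact hpt x hxE hxΩ
  have step2 : ∫ x in Ω, G x ≤ ∫ x, G x := setIntegral_le_integral hGint (ae_of_all _ hGnn)
  have hGval : ∫ x, G x = (η/δx + 1) * ∑ j ∈ Finset.Icc 1 (N-1), η * (D j)^2 := by
    rw [hG]
    rw [MeasureTheory.integral_const_mul]
    congr 1
    rw [integral_finset_sum _ fun j _ => hind_int j]
    refine Finset.sum_congr rfl fun j _ => ?_
    rw [integral_indicator_const _ measurableSet_Ico, Real.volume_real_Ico, smul_eq_mul]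
    congr 1
    rw [show α + (j:ℝ)*δx - (α + (j:ℝ)*δx - η) = η by ring, max_eq_left hη]
  refine step1.trans (step2.trans ?_)
  rw [hGval, Finset.mul_sum, Finset.sum_mul, Finset.sum_mul]
  apply Finset.sum_le_sum
  intro j _
  have hne : δx ≠ 0 := ne_of_gt hδx
  have e1 : (η/δx + 1) * (η * D j ^2) = ((D j)^2 / δx) * (η * (η + δx)) := by
    field_simp
  have e2 : δx * ((v (j+1) - v j)/δx)^2 * η * (η + 2*δx) = ((D j)^2/δx) * (η * (η + 2*δx)) := by
    rw [hD]; field_simp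
  rw [e1, e2]
  refine mul_le_mul_of_nonneg_left ?_ (by positivity)
  exact mul_le_mul_of_nonneg_left (by linarith) hη

theorem stmt16_nonneg
    (α β T : ℝ) (hαβ : α < β) (hT : 0 < T)
    (N M : ℕ) (hN : 0 < N) (hM : 0 < M)
    (δx δt : ℝ) (hδx : δx = (β - α) / (N : ℝ)) (hδt : δt = T / (M : ℝ))
    (z : ℝ → ℝ → ℝ) (val : ℕ → ℕ → ℝ)
    (hz : ∀ j : ℕ, 1 ≤ j → j ≤ N → ∀ n : ℕ, n < M →
      ∀ x ∈ Ioo (α + ((j : ℝ) - 1) * δx) (α + (j : ℝ) * δx),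
      ∀ t ∈ Ioc ((n : ℝ) * δt) (((n : ℝ) + 1) * δt),
      z x t = val j (n + 1))
    (η : ℝ) (hη : 0 ≤ η) :
    (∫ t in Ioo (0:ℝ) T, ∫ x in {x : ℝ | x ∈ Ioo α β ∧ x + η ∈ Ioo α β},
        (z (x + η) t - z x t) ^ 2)
      ≤ (∑ n ∈ Finset.range M, δt * ∑ j ∈ Finset.Icc 1 (N - 1),
            δx * ((val (j + 1) (n + 1) - val j (n + 1)) / δx) ^ 2)
          * η * (η + 2 * δx) := by
  have hβα : (0:ℝ) < β - α := by linarith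
  have hδx0 : 0 < δx := by rw [hδx]; positivity
  have hδt0 : 0 < δt := by rw [hδt]; positivity
  have hNne : (N:ℝ) ≠ 0 := Nat.cast_ne_zero.2 hN.ne'
  have hMne : (M:ℝ) ≠ 0 := Nat.cast_ne_zero.2 hM.ne'
  have hβeq : β = α + (N:ℝ) * δx := by rw [hδx]; field_simp; ring
  have hTM : T = (M:ℝ) * δt := by rw [hδt]; field_simp
  rw [hβeq]
  set Ω : Set ℝ := {x : ℝ | x ∈ Ioo α (α + (N:ℝ) * δx) ∧ x + η ∈ Ioo α (α + (N:ℝ) * δx)}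
    with hΩdef
  have hΩ : MeasurableSet Ω := by
    have : Ω = Ioo α (α + (N:ℝ)*δx) ∩ (fun x : ℝ => x + η) ⁻¹' (Ioo α (α + (N:ℝ)*δx)) := by
      ext x; simp only [hΩdef, Set.mem_setOf_eq, Set.mem_inter_iff, Set.mem_preimage]
    rw [this]
    exact measurableSet_Ioo.inter (measurableSet_Ioo.preimage (measurable_add_const η))
  set E : Set ℝ := (range fun j : ℤ => α + (j : ℝ) * δx) ∪
      (range fun j : ℤ => α + (j : ℝ) * δx - η) with hE
  have hEnull : volume E = 0 :=
    ((countable_range _).union (countable_range _)).measure_zero _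
  set W : ℕ → ℝ → ℝ := fun n x => val (⌊(x - α)/δx⌋.toNat + 1) (n+1) with hW
  set I : ℕ → ℝ := fun n => ∫ x in Ω, (W n (x+η) - W n x)^2 with hI
  -- step values
  have main : ∀ n : ℕ, n < M → ∀ t ∈ Ioc ((n : ℝ) * δt) (((n : ℝ) + 1) * δt),
      ∀ y : ℝ, y ∈ Ioo α (α + (N:ℝ)*δx) → (∀ j : ℤ, y ≠ α + (j:ℝ)*δx) →
      z y t = val (⌊(y-α)/δx⌋.toNat + 1) (n+1) := by
    intro n hn t ht y hy hgrid
    set u := (y - α)/δx with hu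
    have hu0 : 0 ≤ u := le_of_lt (div_pos (by linarith [hy.1]) hδx0)
    have huN : u < N := by
      rw [hu, div_lt_iff₀ hδx0]
      have := hy.2; linarith
    have hlt : (⌊u⌋ : ℝ) < u := by
      refine lt_of_le_of_ne (Int.floor_le u) fun heq => hgrid ⌊u⌋ ?_
      have : y - α = u * δx := by rw [hu]; field_simp
      rw [← heq] at this; linarith
    set a := ⌊u⌋.toNat with ha
    have haR : ((a:ℝ)) = ((⌊u⌋:ℤ) : ℝ) := by
      have h0 := Int.toNat_of_nonneg (Int.floor_nonneg.2 hu0)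
      exact_mod_cast h0
    have haN : a + 1 ≤ N := by
      have : ⌊u⌋ < (N : ℤ) := Int.floor_lt.2 (by exact_mod_cast huN)
      omega
    have hyu : y - α = u * δx := by rw [hu]; field_simp
    refine hz (a+1) (by omega) haN n hn y ⟨?_, ?_⟩ t ht
    · push_cast
      have : ((a:ℝ)) * δx < u * δx := by
        apply mul_lt_mul_of_pos_right _ hδx0
        rw [haR]; exact hlt
      simp only [add_sub_cancel_right]
      linarith [hyu ▸ this]
    · push_cast
      have h2 : u < (a:ℝ) + 1 := by rw [haR]; exact_mod_cast Int.lt_floor_add_one u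
      have : u * δx < ((a:ℝ) + 1) * δx := mul_lt_mul_of_pos_right h2 hδx0
      linarith [hyu ▸ this]
  have hFconst : ∀ n : ℕ, n < M → ∀ t ∈ Ioc ((n : ℝ) * δt) (((n : ℝ) + 1) * δt),
      (∫ x in Ω, (z (x + η) t - z x t)^2) = I n := by
    intro n hn t ht
    rw [hI]
    refine setIntegral_congr_ae hΩ ?_
    filter_upwards [measure_eq_zero_iff_ae_notMem.1 hEnull] with x hxE hxΩ
    obtain ⟨hx1, hx2⟩ := hxΩ
    have hnotE1 : ∀ j : ℤ, x ≠ α + (j:ℝ) * δx := fun j hj => hxE (Or.inl ⟨j, hj.symm⟩)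
    have hnotE2 : ∀ j : ℤ, x + η ≠ α + (j:ℝ) * δx := fun j hj =>
      hxE (Or.inr ⟨j, show α + (j:ℝ)*δx - η = x by linarith⟩)
    rw [main n hn t ht (x + η) hx2 hnotE2, main n hn t ht x hx1 hnotE1]
  -- time decomposition
  have key : (∫ t in Ioo (0:ℝ) T, ∫ x in Ω, (z (x + η) t - z x t) ^ 2)
      = ∑ n ∈ Finset.range M, δt * I n := by
    set F : ℝ → ℝ := fun t => ∫ x in Ω, (z (x + η) t - z x t)^2 with hF
    set a : ℕ → ℝ := fun k => (k:ℝ) * δt with haDef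
    have haS : ∀ k : ℕ, a (k+1) = ((k:ℝ) + 1) * δt := by
      intro k; simp only [haDef]; push_cast; ring
    have hmono : ∀ k : ℕ, a k ≤ a (k+1) := by
      intro k; rw [haS]; simp only [haDef]
      apply mul_le_mul_of_nonneg_right _ hδt0.le
      linarith
    have hint : ∀ k, k < M → IntervalIntegrable F volume (a k) (a (k+1)) := by
      intro k hk
      rw [intervalIntegrable_iff_integrableOn_Ioc_of_le (hmono k)]
      refine (integrableOn_const (C := I k) measure_Ioc_lt_top.ne).congr ?_
      refine ((ae_restrict_iff' measurableSet_Ioc).2 (ae_of_all _ fun t ht => ?_))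
      rw [haS] at ht
      exact (hFconst k hk t ht).symm
    have hsum := intervalIntegral.sum_integral_adjacent_intervals (a := a) (μ := volume)
      (fun k hk => hint k hk)
    have ha0 : a 0 = 0 := by simp [haDef]
    have haM : a M = T := by simp only [haDef]; rw [hTM]
    calc (∫ t in Ioo (0:ℝ) T, F t)
        = ∫ t in Ioc (0:ℝ) T, F t := setIntegral_congr_set Ioo_ae_eq_Ioc
      _ = ∫ t in (0:ℝ)..T, F t := (intervalIntegral.integral_of_le hT.le).symm
      _ = ∫ t in (a 0)..(a M), F t := by rw [ha0, haM]
      _ = ∑ k ∈ Finset.range M, ∫ t in (a k)..(a (k+1)), F t := hsum.symm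
      _ = ∑ k ∈ Finset.range M, δt * I k := by
          refine Finset.sum_congr rfl fun k hk => ?_
          rw [intervalIntegral.integral_of_le (hmono k)]
          have heqon : EqOn F (fun _ => I k) (Ioc (a k) (a (k+1))) := by
            intro t ht
            rw [haS] at ht
            exact hFconst k (Finset.mem_range.1 hk) t ht
          rw [setIntegral_congr_fun measurableSet_Ioc heqon]
          simp only [setIntegral_const, Real.volume_real_Ioc, smul_eq_mul]
          congr 1
          rw [haS]
          rw [show ((k:ℝ)+1) * δt - a k = δt by rw [haDef]; ring, max_eq_left hδt0.le]
  rw [key]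
  have hspace : ∀ n : ℕ, I n ≤
      (∑ j ∈ Finset.Icc 1 (N - 1), δx * ((val (j + 1) (n + 1) - val j (n + 1)) / δx) ^ 2)
        * η * (η + 2 * δx) := by
    intro n
    exact spatial α δx η hδx0 N hN hη (fun j => val j (n+1))
  calc ∑ n ∈ Finset.range M, δt * I n
      ≤ ∑ n ∈ Finset.range M, δt *
          ((∑ j ∈ Finset.Icc 1 (N - 1),
            δx * ((val (j + 1) (n + 1) - val j (n + 1)) / δx) ^ 2) * η * (η + 2 * δx)) :=
        Finset.sum_le_sum fun n _ => mul_le_mul_of_nonneg_left (hspace n) hδt0.le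
    _ = (∑ n ∈ Finset.range M, δt * ∑ j ∈ Finset.Icc 1 (N - 1),
            δx * ((val (j + 1) (n + 1) - val j (n + 1)) / δx) ^ 2) * η * (η + 2 * δx) := by
        rw [Finset.sum_mul, Finset.sum_mul]
        exact Finset.sum_congr rfl fun n _ => by ring

/-- Space translate estimate for a piecewise constant function on a space-time grid:
`∫₀^T ∫_{Ω_η} (z(x+η,t) - z(x,t))² dx dt ≤ |z|²_{1,D} · |η| · (|η| + 2δx)`. -/
theorem stmt16
    (α β T : ℝ) (hαβ : α < β) (hT : 0 < T)
    (N M : ℕ) (hN : 0 < N) (hM : 0 < M)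
    (δx δt : ℝ) (hδx : δx = (β - α) / (N : ℝ)) (hδt : δt = T / (M : ℝ))
    (z : ℝ → ℝ → ℝ) (val : ℕ → ℕ → ℝ)
    (hz : ∀ j : ℕ, 1 ≤ j → j ≤ N → ∀ n : ℕ, n < M →
      ∀ x ∈ Ioo (α + ((j : ℝ) - 1) * δx) (α + (j : ℝ) * δx),
      ∀ t ∈ Ioc ((n : ℝ) * δt) (((n : ℝ) + 1) * δt),
      z x t = val j (n + 1))
    (η : ℝ) :
    (∫ t in Ioo (0:ℝ) T, ∫ x in {x : ℝ | x ∈ Ioo α β ∧ x + η ∈ Ioo α β},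
        (z (x + η) t - z x t) ^ 2)
      ≤ (∑ n ∈ Finset.range M, δt * ∑ j ∈ Finset.Icc 1 (N - 1),
            δx * ((val (j + 1) (n + 1) - val j (n + 1)) / δx) ^ 2)
          * |η| * (|η| + 2 * δx) := by
  rcases le_or_gt 0 η with hη | hη
  · have h := stmt16_nonneg α β T hαβ hT N M hN hM δx δt hδx hδt z val hz η hη
    rwa [abs_of_nonneg hη]
  · have h := stmt16_nonneg α β T hαβ hT N M hN hM δx δt hδx hδt z val hz (-η) (by linarith)
    rw [abs_of_neg hη]
    have hmeas : MeasurableSet {x : ℝ | x ∈ Ioo α β ∧ x + η ∈ Ioo α β} := by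
      have : {x : ℝ | x ∈ Ioo α β ∧ x + η ∈ Ioo α β}
          = Ioo α β ∩ (fun x : ℝ => x + η) ⁻¹' (Ioo α β) := by
        ext x; simp only [Set.mem_setOf_eq, Set.mem_inter_iff, Set.mem_preimage]
      rw [this]
      exact measurableSet_Ioo.inter (measurableSet_Ioo.preimage (measurable_add_const η))
    have hmeas' : MeasurableSet {x : ℝ | x ∈ Ioo α β ∧ x + -η ∈ Ioo α β} := by
      have : {x : ℝ | x ∈ Ioo α β ∧ x + -η ∈ Ioo α β}
          = Ioo α β ∩ (fun x : ℝ => x + -η) ⁻¹' (Ioo α β) := by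
        ext x; simp only [Set.mem_setOf_eq, Set.mem_inter_iff, Set.mem_preimage]
      rw [this]
      exact measurableSet_Ioo.inter (measurableSet_Ioo.preimage (measurable_add_const (-η)))
    have hLHS : ∀ t : ℝ,
        (∫ x in {x : ℝ | x ∈ Ioo α β ∧ x + η ∈ Ioo α β}, (z (x + η) t - z x t)^2)
        = ∫ x in {x : ℝ | x ∈ Ioo α β ∧ x + -η ∈ Ioo α β}, (z (x + -η) t - z x t)^2 := by
      intro t
      rw [← integral_indicator hmeas, ← integral_indicator hmeas']
      have hshift := integral_add_right_eq_self
        (μ := volume) (fun x => ({x : ℝ | x ∈ Ioo α β ∧ x + η ∈ Ioo α β}).indicator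
          (fun y => (z (y + η) t - z y t)^2) x) (-η)
      rw [← hshift]
      congr 1
      funext x
      simp only [Set.indicator_apply, Set.mem_setOf_eq]
      have hxeq : x + -η + η = x := by ring
      by_cases hc : x ∈ Ioo α β ∧ x + -η ∈ Ioo α β
      · rw [if_pos ⟨hc.2, by rw [hxeq]; exact hc.1⟩, if_pos hc, hxeq]; ring
      · rw [if_neg (fun hcc => hc ⟨hxeq ▸ hcc.2, hcc.1⟩), if_neg hc]
    simp only [hLHS]
    exact h
end
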